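/- arXiv:0808.2749 — 11 statements merged into one kernel-verified Lean document; each statement's English description precedes it below -/
import Mathlib

section
/- Let a ≥ 1 be an integer and let ζ ∈ ℂ be a primitive a-th root of unity. Let σ be the ℂ-algebra automorphism of the polynomial ring ℂ[X,Y] determined by σ(X) = ζ·X and σ(Y) = ζ·Y. Then the fixed subalgebra {f ∈ ℂ[X,Y] : σ(f) = f} equals the ℂ-linear span of the monomials X^i·Y^j with a dividing i + j, and it is generated as a ℂ-algebra by the a+1 monomials X^i·Y^{a−i} for 0 ≤ i ≤ a. -/
open MvPolynomial

/-- For `a ≥ 1` and `ζ` a primitive `a`-th root of unity, the fixed subalgebra of the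
diagonal automorphism `X ↦ ζX`, `Y ↦ ζY` of `ℂ[X,Y]` is the ℂ-linear span of the monomials
`X^i Y^j` with `a ∣ i + j`, and is generated as a ℂ-algebra by the `a+1` monomials
`X^i Y^{a-i}`, `0 ≤ i ≤ a`. -/
theorem stmt_2 (a : ℕ) (ha : 1 ≤ a) (ζ : ℂ) (hζ : IsPrimitiveRoot ζ a)
    (σ : MvPolynomial (Fin 2) ℂ ≃ₐ[ℂ] MvPolynomial (Fin 2) ℂ)
    (hσX : σ (X 0) = C ζ * X 0) (hσY : σ (X 1) = C ζ * X 1) :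
    {f : MvPolynomial (Fin 2) ℂ | σ f = f} =
      ↑(Submodule.span ℂ {p : MvPolynomial (Fin 2) ℂ |
          ∃ i j : ℕ, a ∣ (i + j) ∧ p = X 0 ^ i * X 1 ^ j}) ∧
    {f : MvPolynomial (Fin 2) ℂ | σ f = f} =
      ↑(Algebra.adjoin ℂ {p : MvPolynomial (Fin 2) ℂ |
          ∃ i : ℕ, i ≤ a ∧ p = X 0 ^ i * X 1 ^ (a - i)}) := by
  have hmon : ∀ (d : Fin 2 →₀ ℕ) (c : ℂ),
      monomial d c = C c * X 0 ^ d 0 * X 1 ^ d 1 := fun d c => by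
    rw [MvPolynomial.monomial_eq, Finsupp.prod_fintype _ _ (fun i => pow_zero _),
      Fin.prod_univ_two, mul_assoc]
  have hσpow : ∀ i j : ℕ, σ (X 0 ^ i * X 1 ^ j) =
      C (ζ ^ (i + j)) * (X 0 ^ i * X 1 ^ j) := by
    intro i j
    rw [map_mul, map_pow, map_pow, hσX, hσY, mul_pow, mul_pow, ← C_pow, ← C_pow, pow_add,
      map_mul]
    ring
  have hC : ∀ c : ℂ, σ (C c) = C c := fun c => by
    rw [← MvPolynomial.algebraMap_eq]; exact σ.commutes c
  have hσmon : ∀ (d : Fin 2 →₀ ℕ) (c : ℂ),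
      σ (monomial d c) = monomial d (ζ ^ (d 0 + d 1) * c) := by
    intro d c
    rw [hmon, hmon, mul_assoc, map_mul, hC, hσpow, map_mul]
    ring
  have hcoeff : ∀ (f : MvPolynomial (Fin 2) ℂ) (e : Fin 2 →₀ ℕ),
      coeff e (σ f) = ζ ^ (e 0 + e 1) * coeff e f := by
    intro f e
    conv_lhs => rw [f.as_sum]
    rw [map_sum, coeff_sum]
    simp only [hσmon, coeff_monomial]
    rw [Finset.sum_ite_eq' f.support e (fun d => ζ ^ (d 0 + d 1) * coeff d f)]
    by_cases he : e ∈ f.support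
    · simp [he]
    · simp [he, notMem_support_iff.mp he]
  have hζone : ∀ n : ℕ, a ∣ n → ζ ^ n = 1 := fun n hn =>
    (hζ.pow_eq_one_iff_dvd n).mpr hn
  -- key characterization
  have key : ∀ f : MvPolynomial (Fin 2) ℂ, σ f = f ↔ ∀ d ∈ f.support, a ∣ d 0 + d 1 := by
    intro f
    constructor
    · intro hf d hd
      have h1 : ζ ^ (d 0 + d 1) * coeff d f = coeff d f := by
        rw [← hcoeff f d, hf]
      have h2 : coeff d f ≠ 0 := mem_support_iff.mp hd
      have h3 : ζ ^ (d 0 + d 1) = 1 :=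
        mul_right_cancel₀ h2 (by rw [h1, one_mul])
      exact (hζ.pow_eq_one_iff_dvd _).mp h3
    · intro hf
      apply MvPolynomial.ext
      intro e
      rw [hcoeff]
      by_cases he : e ∈ f.support
      · rw [hζone _ (hf e he), one_mul]
      · rw [notMem_support_iff.mp he, mul_zero]
  -- the fixed set as a submodule and subalgebra
  set Sspan := {p : MvPolynomial (Fin 2) ℂ | ∃ i j : ℕ, a ∣ (i + j) ∧ p = X 0 ^ i * X 1 ^ j}
    with hSspan
  set Sgen := {p : MvPolynomial (Fin 2) ℂ | ∃ i : ℕ, i ≤ a ∧ p = X 0 ^ i * X 1 ^ (a - i)}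
    with hSgen
  have hfix_sub : ∀ p ∈ Sspan, σ p = p := by
    rintro p ⟨i, j, hij, rfl⟩
    rw [hσpow, hζone _ hij, map_one, one_mul]
  -- span ⊆ fixed
  have hspan_le : ∀ f ∈ Submodule.span ℂ Sspan, σ f = f := by
    intro f hf
    induction hf using Submodule.span_induction with
    | mem x hx => exact hfix_sub x hx
    | zero => exact map_zero σ
    | add x y _ _ hx hy => rw [map_add, hx, hy]
    | smul c x _ hx => rw [map_smul, hx]
  -- adjoin ⊆ fixed
  have hadj_le : ∀ f ∈ Algebra.adjoin ℂ Sgen, σ f = f := by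
    intro f hf
    induction hf using Algebra.adjoin_induction with
    | mem x hx =>
      obtain ⟨i, hi, rfl⟩ := hx
      exact hfix_sub _ ⟨i, a - i, by simp [Nat.add_sub_cancel' hi], rfl⟩
    | algebraMap c => rw [MvPolynomial.algebraMap_eq]; exact hC c
    | add x y _ _ hx hy => rw [map_add, hx, hy]
    | mul x y _ _ hx hy => rw [map_mul, hx, hy]
  -- fixed ⊆ span
  have hle_span : ∀ f : MvPolynomial (Fin 2) ℂ, σ f = f → f ∈ Submodule.span ℂ Sspan := by
    intro f hf
    have : f = ∑ d ∈ f.support, coeff d f • (X 0 ^ d 0 * X 1 ^ d 1) := by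
      conv_lhs => rw [f.as_sum]
      refine Finset.sum_congr rfl fun d _ => ?_
      rw [hmon, smul_eq_C_mul, mul_assoc]
    rw [this]
    refine Submodule.sum_mem _ fun d hd => Submodule.smul_mem _ _ ?_
    exact Submodule.subset_span ⟨d 0, d 1, (key f).mp hf d hd, rfl⟩
  have hfirst : {f : MvPolynomial (Fin 2) ℂ | σ f = f} = ↑(Submodule.span ℂ Sspan) := by
    ext f
    exact ⟨fun hf => hle_span f hf, fun hf => hspan_le f hf⟩
  refine ⟨hfirst, ?_⟩
  -- membership of monomials in the adjoin, by induction
  have hmem : ∀ k i j : ℕ, i + j = a * k →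
      X 0 ^ i * X 1 ^ j ∈ Algebra.adjoin ℂ Sgen := by
    intro k
    induction k with
    | zero =>
      intro i j h
      obtain ⟨rfl, rfl⟩ : i = 0 ∧ j = 0 := by omega
      simpa using one_mem (Algebra.adjoin ℂ Sgen)
    | succ k ih =>
      intro i j h
      rw [Nat.mul_succ] at h
      by_cases hi : a ≤ i
      · have heq : (X 0 ^ i * X 1 ^ j : MvPolynomial (Fin 2) ℂ) = (X 0 ^ a * X 1 ^ (a - a)) * (X 0 ^ (i - a) * X 1 ^ j) := by
          rw [Nat.sub_self, pow_zero, mul_one, ← mul_assoc, ← pow_add,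
            Nat.add_sub_cancel' hi]
        rw [heq]
        exact mul_mem (Algebra.subset_adjoin ⟨a, le_refl a, rfl⟩) (ih (i - a) j (by omega))
      · have hj : a - i ≤ j := by omega
        have heq : (X 0 ^ i * X 1 ^ j : MvPolynomial (Fin 2) ℂ) = (X 0 ^ i * X 1 ^ (a - i)) * X 1 ^ (j - (a - i)) := by
          rw [mul_assoc, ← pow_add, Nat.add_sub_cancel' hj]
        rw [heq]
        refine mul_mem (Algebra.subset_adjoin ⟨i, le_of_not_ge hi, rfl⟩) ?_
        have := ih 0 (j - (a - i)) (by omega)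
        simpa using this
  ext f
  constructor
  · intro hf
    have hf' := hle_span f hf
    have hsp : Submodule.span ℂ Sspan ≤ Subalgebra.toSubmodule (Algebra.adjoin ℂ Sgen) := by
      rw [Submodule.span_le]
      rintro p ⟨i, j, ⟨k, hk⟩, rfl⟩
      exact hmem k i j hk
    exact hsp hf'
  · intro hf
    exact hadj_le f hf
end

section
/- Let a ≥ 1 be an integer and let M_a = {(x,y) ∈ ℤ × ℤ : 0 ≤ y and y ≤ −a·x} be the monoid of integral points of the cone in ℝ² generated by (−1,a) and (−1,0). Let ζ ∈ ℂ be a primitive a-th root of unity and let σ be the ℂ-algebra automorphism of ℂ[X,Y] with σ(X) = ζX, σ(Y) = ζY. Then the ℂ-linear map from the monoid algebra ℂ[M_a] to ℂ[X,Y] sending the monomial z^{(x,y)} (for (x,y) ∈ M_a) to X^y·Y^{−a·x−y} is an injective ℂ-algebra homomorphism whose image is exactly the fixed subalgebra {f ∈ ℂ[X,Y] : σ(f) = f}. -/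
open MvPolynomial


lemma fin2_finsupp_eq (d : Fin 2 →₀ ℕ) :
    Finsupp.single (0 : Fin 2) (d 0) + Finsupp.single (1 : Fin 2) (d 1) = d := by
  ext i
  fin_cases i <;> simp [Finsupp.single_apply]

lemma sigma_monomial (ζ : ℂ) (σ : MvPolynomial (Fin 2) ℂ ≃ₐ[ℂ] MvPolynomial (Fin 2) ℂ)
    (hσX : σ (X 0) = C ζ * X 0) (hσY : σ (X 1) = C ζ * X 1)
    (d : Fin 2 →₀ ℕ) (c : ℂ) :
    σ (monomial d c) = monomial d (ζ ^ (d 0 + d 1) * c) := by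
  have h : ∀ e : ℂ, (monomial d e : MvPolynomial (Fin 2) ℂ)
      = C e * X 0 ^ (d 0) * X 1 ^ (d 1) := by
    intro e
    simp [X_pow_eq_monomial, C_mul_monomial, monomial_mul, fin2_finsupp_eq]
  have hC : σ (C c) = C c := by
    have := σ.commutes c
    simpa [MvPolynomial.algebraMap_eq] using this
  rw [h c, map_mul, map_mul, map_pow, map_pow, hσX, hσY, hC, h]
  simp only [mul_pow, ← C_pow, pow_add, C_mul]
  ring

lemma coeff_sigma (ζ : ℂ) (σ : MvPolynomial (Fin 2) ℂ ≃ₐ[ℂ] MvPolynomial (Fin 2) ℂ)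
    (hσX : σ (X 0) = C ζ * X 0) (hσY : σ (X 1) = C ζ * X 1)
    (f : MvPolynomial (Fin 2) ℂ) (d : Fin 2 →₀ ℕ) :
    coeff d (σ f) = ζ ^ (d 0 + d 1) * coeff d f := by
  induction f using MvPolynomial.induction_on' with
  | monomial d' c =>
      rw [sigma_monomial ζ σ hσX hσY]
      simp only [coeff_monomial]
      split_ifs with h
      · subst h; ring
      · ring
  | add p q hp hq => simp [map_add, hp, hq, mul_add]

/-- For `a ≥ 1`, the ℂ-algebra map from the monoid algebra of
`M_a = {(x,y) ∈ ℤ² : 0 ≤ y, y ≤ -a·x}` to `ℂ[X,Y]` sending `z^{(x,y)} ↦ X^y·Y^{-ax-y}`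
is injective with image the fixed subalgebra of the diagonal `ℤ/a`-action `X ↦ ζX, Y ↦ ζY`. -/
theorem stmt_3 (a : ℕ) (ha : 1 ≤ a)
    (M : AddSubmonoid (ℤ × ℤ))
    (hM : ∀ p : ℤ × ℤ, p ∈ M ↔ 0 ≤ p.2 ∧ p.2 ≤ -((a : ℤ) * p.1))
    (ζ : ℂ) (hζ : IsPrimitiveRoot ζ a)
    (σ : MvPolynomial (Fin 2) ℂ ≃ₐ[ℂ] MvPolynomial (Fin 2) ℂ)
    (hσX : σ (X 0) = C ζ * X 0) (hσY : σ (X 1) = C ζ * X 1)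
    (Φ : AddMonoidAlgebra ℂ M →ₐ[ℂ] MvPolynomial (Fin 2) ℂ)
    (hΦ : ∀ m : M, Φ (AddMonoidAlgebra.single m 1) =
        X 0 ^ ((m : ℤ × ℤ).2.toNat) *
          X 1 ^ ((-(a : ℤ) * (m : ℤ × ℤ).1 - (m : ℤ × ℤ).2).toNat)) :
    Function.Injective Φ ∧ Set.range Φ = {f : MvPolynomial (Fin 2) ℂ | σ f = f} := by
  classical
  set D : M → (Fin 2 →₀ ℕ) := fun m =>
    Finsupp.single (0 : Fin 2) ((m : ℤ × ℤ).2.toNat) +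
      Finsupp.single (1 : Fin 2) ((-(a : ℤ) * (m : ℤ × ℤ).1 - (m : ℤ × ℤ).2).toNat) with hD
  have hD0 : ∀ m : M, D m 0 = (m : ℤ × ℤ).2.toNat := by
    intro m; simp [hD, Finsupp.single_apply]
  have hD1 : ∀ m : M, D m 1 = (-(a : ℤ) * (m : ℤ × ℤ).1 - (m : ℤ × ℤ).2).toNat := by
    intro m; simp [hD, Finsupp.single_apply]
  have hΦ' : ∀ (m : M) (c : ℂ), Φ (AddMonoidAlgebra.single m c) = monomial (D m) c := by
    intro m c
    have h1 : AddMonoidAlgebra.single m c = c • AddMonoidAlgebra.single m (1 : ℂ) := by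
      rw [AddMonoidAlgebra.smul_single', mul_one]
    rw [h1, map_smul, hΦ m, X_pow_eq_monomial, X_pow_eq_monomial, monomial_mul,
      smul_monomial]
    simp [hD]
  have hmap : ∀ f, Φ f = AddMonoidAlgebra.mapDomain D f := by
    intro f
    induction f using AddMonoidAlgebra.induction_linear with
    | zero => simp
    | add f g hf hg => rw [map_add, AddMonoidAlgebra.mapDomain_add, hf, hg]
    | single m c =>
        rw [hΦ' m c, AddMonoidAlgebra.mapDomain_single]
        exact (MvPolynomial.single_eq_monomial (D m) c).symm
  -- injectivity of D
  have hDinj : Function.Injective D := by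
    rintro ⟨⟨x, y⟩, hm⟩ ⟨⟨x', y'⟩, hm'⟩ h
    obtain ⟨hy, hxy⟩ := (hM (x, y)).1 hm
    obtain ⟨hy', hxy'⟩ := (hM (x', y')).1 hm'
    simp only at hy hxy hy' hxy'
    have h0 := congrArg (fun d => d 0) h
    have h1 := congrArg (fun d => d 1) h
    simp only [hD0, hD1, neg_mul] at h0 h1
    set k := (a : ℤ) * x with hk
    set k' := (a : ℤ) * x' with hk'
    have hyy : y = y' := by omega
    have hkk : k = k' := by omega
    have hx : x = x' := by
      have ha0 : (a : ℤ) ≠ 0 := by exact_mod_cast Nat.one_le_iff_ne_zero.mp ha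
      exact mul_left_cancel₀ ha0 (hk ▸ hk' ▸ hkk)
    exact Subtype.ext (Prod.ext hx hyy)
  have hinj : Function.Injective Φ := by
    intro f g hfg
    apply AddMonoidAlgebra.mapDomain_injective hDinj
    rw [← hmap f, ← hmap g]
    exact hfg
  -- divisibility of exponent sums on the image
  have hdvd : ∀ m : M, ∃ n : ℕ, D m 0 + D m 1 = a * n := by
    rintro ⟨⟨x, y⟩, hm⟩
    obtain ⟨hy, hxy⟩ := (hM (x, y)).1 hm
    simp only at hy hxy
    refine ⟨(-x).toNat, ?_⟩
    rw [hD0, hD1]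
    simp only [neg_mul]
    have hxneg : 0 ≤ -x := by
      by_contra hc
      push_neg at hc
      have hk : (0 : ℤ) < (a : ℤ) * x := by
        have h1 : 0 < x := by omega
        have h2 : (0 : ℤ) < (a : ℤ) := by exact_mod_cast ha
        positivity
      omega
    have hcast : ((a * (-x).toNat : ℕ) : ℤ) = -((a : ℤ) * x) := by
      push_cast [Int.toNat_of_nonneg hxneg]
      ring
    omega
  refine ⟨hinj, Set.Subset.antisymm ?_ ?_⟩
  · -- range ⊆ fixed
    rintro _ ⟨f, rfl⟩
    show σ (Φ f) = Φ f
    apply MvPolynomial.ext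
    intro d
    rw [coeff_sigma ζ σ hσX hσY]
    by_cases hc : coeff d (Φ f) = 0
    · rw [hc]; ring
    · have hd : d ∈ (Φ f).support := mem_support_iff.2 hc
      have hsupp : (Φ f).support ⊆ f.coeff.support.image D := by
        rw [hmap f]
        exact Finsupp.mapDomain_support
      obtain ⟨m, hm, rfl⟩ := Finset.mem_image.1 (hsupp hd)
      obtain ⟨n, hn⟩ := hdvd m
      rw [hn, pow_mul, hζ.pow_eq_one, one_pow, one_mul]
  · -- fixed ⊆ range
    intro f hf
    have hf' : σ f = f := hf
    have hsup : ∀ d ∈ f.support, a ∣ d 0 + d 1 := by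
      intro d hd
      have h1 : ζ ^ (d 0 + d 1) * coeff d f = coeff d f := by
        conv_rhs => rw [← hf']
        rw [coeff_sigma ζ σ hσX hσY]
      have hc : coeff d f ≠ 0 := mem_support_iff.1 hd
      have hz : ζ ^ (d 0 + d 1) = 1 :=
        mul_right_cancel₀ hc (h1.trans (one_mul (coeff d f)).symm)
      exact (hζ.pow_eq_one_iff_dvd _).1 hz
    set md : (Fin 2 →₀ ℕ) → M := fun d =>
      if h : ((-(((d 0 + d 1) / a : ℕ) : ℤ), ((d 0 : ℕ) : ℤ)) ∈ M) then ⟨_, h⟩ else 0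
      with hmd
    have hDmd : ∀ d ∈ f.support, D (md d) = d := by
      intro d hd
      have hdvd' := hsup d hd
      have hq : a * ((d 0 + d 1) / a) = d 0 + d 1 := Nat.mul_div_cancel' hdvd'
      have hQ : (a : ℤ) * (((d 0 + d 1) / a : ℕ) : ℤ) = ((d 0 : ℕ) : ℤ) + ((d 1 : ℕ) : ℤ) := by
        exact_mod_cast congrArg (Nat.cast : ℕ → ℤ) hq
      have hmem : ((-(((d 0 + d 1) / a : ℕ) : ℤ), ((d 0 : ℕ) : ℤ)) ∈ M) := by
        rw [hM]
        refine ⟨Int.natCast_nonneg _, ?_⟩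
        simp only [mul_neg, neg_neg]
        omega
      have hmdd : md d = ⟨(-(((d 0 + d 1) / a : ℕ) : ℤ), ((d 0 : ℕ) : ℤ)), hmem⟩ := by
        rw [hmd]; exact dif_pos hmem
      rw [hmdd]
      show Finsupp.single (0 : Fin 2) (((d 0 : ℕ) : ℤ).toNat) +
          Finsupp.single (1 : Fin 2)
            ((-(a : ℤ) * (-(((d 0 + d 1) / a : ℕ) : ℤ)) - ((d 0 : ℕ) : ℤ)).toNat) = d
      have e1 : ((d 0 : ℕ) : ℤ).toNat = d 0 := Int.toNat_natCast _
      have e2 : (-(a : ℤ) * (-(((d 0 + d 1) / a : ℕ) : ℤ)) - ((d 0 : ℕ) : ℤ)).toNat = d 1 := by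
        simp only [neg_mul, mul_neg, neg_neg]
        omega
      rw [e1, e2, fin2_finsupp_eq]
    refine Set.mem_range.2 ⟨∑ d ∈ f.support, AddMonoidAlgebra.single (md d) (coeff d f), ?_⟩
    rw [map_sum]
    conv_rhs => rw [f.as_sum]
    refine Finset.sum_congr rfl fun d hd => ?_
    rw [hΦ' (md d) (coeff d f), hDmd d hd]
end

section
/- Let n ≥ 1 and let S be an additive submonoid of ℤ^n. An element u of the monoid algebra ℂ[S] (AddMonoidAlgebra ℂ S) is a unit if and only if u = c·z^m for some nonzero c ∈ ℂ and some m ∈ S with −m ∈ S. -/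
open AddMonoidAlgebra

/-- Leading-term lemma: if `a` is `D`-maximal in `f.support` and `b` is `D`-maximal in
`g.support`, then `(f*g) (a+b) = f a * g b`. -/
lemma aux_mul_apply_max {B : Type*} [AddCommGroup B] [LinearOrder B] [IsOrderedAddMonoid B] {S : Type*} [AddCommMonoid S]
    (D : S → B) (hadd : ∀ x y : S, D (x + y) = D x + D y) (hinj : Function.Injective D)
    (f g : AddMonoidAlgebra ℂ S) (a b : S)
    (ha : ∀ x ∈ f.coeff.support, D x ≤ D a) (hb : ∀ y ∈ g.coeff.support, D y ≤ D b) :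
    (f * g).coeff (a + b) = f.coeff a * g.coeff b := by
  classical
  rw [AddMonoidAlgebra.coeff_mul, Finsupp.sum]
  rw [Finset.sum_eq_single a]
  · rw [Finsupp.sum, Finset.sum_eq_single b]
    · rw [if_pos rfl]
    · intro y hy hyb
      rw [if_neg]
      intro h
      have h1 : D (a + y) = D (a + b) := by rw [h]
      rw [hadd, hadd] at h1
      exact hyb (hinj (add_left_cancel h1))
    · intro hbg
      rw [Finsupp.notMem_support_iff.mp hbg, mul_zero, if_pos rfl]
  · intro x hx hxa
    apply Finset.sum_eq_zero
    intro y hy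
    dsimp only
    rw [if_neg]
    intro h
    have h1 : D (x + y) = D (a + b) := by rw [h]
    rw [hadd, hadd] at h1
    have h2 : D x < D a := lt_of_le_of_ne (ha x hx) (fun he => hxa (hinj he))
    have h3 : D y ≤ D b := hb y hy
    exact absurd h1 (ne_of_lt (add_lt_add_of_lt_of_le h2 h3))
  · intro hf
    apply Finset.sum_eq_zero
    intro y _
    dsimp only
    rw [Finsupp.notMem_support_iff.mp hf, zero_mul, ite_self]

/-- For `n ≥ 1` and an additive submonoid `S ⊆ ℤ^n`, an element `u` of the monoid
algebra `ℂ[S]` is a unit iff `u = c·z^m` for some nonzero `c ∈ ℂ` and `m ∈ S` with `-m ∈ S`. -/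
theorem stmt_4 (n : ℕ) (hn : 1 ≤ n) (S : AddSubmonoid (Fin n → ℤ))
    (u : AddMonoidAlgebra ℂ S) :
    IsUnit u ↔ ∃ (c : ℂ) (m : S), c ≠ 0 ∧ -(m : Fin n → ℤ) ∈ S ∧
      u = AddMonoidAlgebra.single m c := by
  constructor
  · rintro ⟨w, rfl⟩
    classical
    set B := Lex (Fin n → ℤ) with hB
    letI : WellFoundedLT (Fin n) := inferInstance
    letI : IsOrderedAddMonoid B := inferInstance
    set D : S → B := fun s => toLex (s : Fin n → ℤ) with hD
    have hadd : ∀ x y : S, D (x + y) = D x + D y := fun x y => rfl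
    have hinj : Function.Injective D := fun x y h => Subtype.ext h
    set u : AddMonoidAlgebra ℂ S := (w : AddMonoidAlgebra ℂ S) with hu
    set v : AddMonoidAlgebra ℂ S := ((w⁻¹ : (AddMonoidAlgebra ℂ S)ˣ) : AddMonoidAlgebra ℂ S)
      with hv
    have huv : u * v = 1 := w.mul_inv
    have hu0 : u ≠ 0 := by
      intro h
      rw [h, zero_mul] at huv
      exact one_ne_zero huv.symm
    have hv0 : v ≠ 0 := by
      intro h
      rw [h, mul_zero] at huv
      exact one_ne_zero huv.symm
    have hus : u.coeff.support.Nonempty :=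
      Finsupp.support_nonempty_iff.mpr (fun h => hu0 (AddMonoidAlgebra.coeff_eq_zero.mp h))
    have hvs : v.coeff.support.Nonempty :=
      Finsupp.support_nonempty_iff.mpr (fun h => hv0 (AddMonoidAlgebra.coeff_eq_zero.mp h))
    obtain ⟨aM, haM, haMmax⟩ := Finset.exists_max_image u.coeff.support D hus
    obtain ⟨bM, hbM, hbMmax⟩ := Finset.exists_max_image v.coeff.support D hvs
    obtain ⟨am, ham, hammin⟩ := Finset.exists_min_image u.coeff.support D hus
    obtain ⟨bm, hbm, hbmmin⟩ := Finset.exists_min_image v.coeff.support D hvs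
    have hMax : aM + bM = 0 := by
      have h1 : (u * v).coeff (aM + bM) = u.coeff aM * v.coeff bM :=
        aux_mul_apply_max D hadd hinj u v aM bM haMmax hbMmax
      have h2 : u.coeff aM * v.coeff bM ≠ 0 :=
        mul_ne_zero (Finsupp.mem_support_iff.mp haM) (Finsupp.mem_support_iff.mp hbM)
      rw [huv] at h1
      by_contra hne
      rw [AddMonoidAlgebra.one_def, AddMonoidAlgebra.coeff_single, Finsupp.single_apply, if_neg (fun h => hne h.symm)] at h1
      exact h2 h1.symm
    have hMin : am + bm = 0 := by
      have h1 : (u * v).coeff (am + bm) = u.coeff am * v.coeff bm := by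
        letI : IsOrderedAddMonoid Bᵒᵈ := inferInstance
        exact aux_mul_apply_max (B := Bᵒᵈ) (fun s => OrderDual.toDual (D s))
          (fun x y => congrArg OrderDual.toDual (hadd x y))
          (fun x y h => hinj (OrderDual.toDual.injective h)) u v am bm
          (fun x hx => hammin x hx) (fun y hy => hbmmin y hy)
      have h2 : u.coeff am * v.coeff bm ≠ 0 :=
        mul_ne_zero (Finsupp.mem_support_iff.mp ham) (Finsupp.mem_support_iff.mp hbm)
      rw [huv] at h1
      by_contra hne
      rw [AddMonoidAlgebra.one_def, AddMonoidAlgebra.coeff_single, Finsupp.single_apply, if_neg (fun h => hne h.symm)] at h1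
      exact h2 h1.symm
    have hD0 : D 0 = 0 := by
      have := hadd 0 0
      rw [add_zero] at this
      exact (left_eq_add.mp this).symm
    have hDMax : D aM + D bM = 0 := by rw [← hadd, hMax, hD0]
    have hDMin : D am + D bm = 0 := by rw [← hadd, hMin, hD0]
    have hle1 : D am ≤ D aM := haMmax am ham
    have hle2 : D bm ≤ D bM := hbMmax bm hbm
    have heq : D am = D aM := by
      by_contra h
      have hlt : D am < D aM := lt_of_le_of_ne hle1 h
      exact absurd (hDMin.trans hDMax.symm) (ne_of_lt (add_lt_add_of_lt_of_le hlt hle2))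
    have ham_eq : am = aM := hinj heq
    have hsupp : u.coeff.support ⊆ {aM} := by
      intro x hx
      have h1 : D x ≤ D aM := haMmax x hx
      have h2 : D aM ≤ D x := heq ▸ (ham_eq ▸ hammin x hx)
      simp [hinj (le_antisymm h1 h2)]
    refine ⟨u.coeff aM, aM, Finsupp.mem_support_iff.mp haM, ?_, ?_⟩
    · have h3 : (aM : Fin n → ℤ) + (bM : Fin n → ℤ) = 0 := by
        have h5 := congrArg (Subtype.val) hMax
        simpa using h5
      have h4 : -(aM : Fin n → ℤ) = (bM : Fin n → ℤ) := by
        rw [neg_eq_iff_add_eq_zero]; exact h3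
      rw [h4]; exact bM.2
    · exact AddMonoidAlgebra.coeff_injective (Finsupp.eq_single_iff.mpr ⟨hsupp, rfl⟩)
  · rintro ⟨c, m, hc, hm, rfl⟩
    refine IsUnit.of_mul_eq_one (AddMonoidAlgebra.single ⟨-(m : Fin n → ℤ), hm⟩ c⁻¹) ?_
    rw [AddMonoidAlgebra.single_mul_single]
    have h0 : m + (⟨-(m : Fin n → ℤ), hm⟩ : S) = 0 := Subtype.ext (add_neg_cancel _)
    rw [h0, mul_inv_cancel₀ hc, AddMonoidAlgebra.one_def]
end

section
/- For n ≥ 1, let φ : ℤ^n → ℚ be given by φ(m) = max_{i ∈ I} ⟨u_i, m⟩ for a finite nonempty family of linear forms u_i ∈ (ℚ^n)^*, let P = {(m,h) ∈ ℤ^n × ℤ : φ(m) ≤ h}, let A = AddMonoidAlgebra ℂ P, and let t = z^{(0,1)}. Then for any (m,h) ∈ P, the image of the monomial z^{(m,h)} in the quotient ring A/(t) is nilpotent if and only if φ(m) < h. -/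
/-- For `φ(m) = max_i ⟨u_i, m⟩` a tropical polynomial on `ℤ^n`,
`P = {(m,h) : φ(m) ≤ h}`, `A = ℂ[P]` and `t = z^{(0,1)}`, the class of a monomial `z^{(m,h)}`
in `A/(t)` is nilpotent iff `φ(m) < h`. -/
theorem stmt_5 (n : ℕ) (hn : 1 ≤ n)
    (ι : Type) [Fintype ι] [Nonempty ι]
    (L : ι → ((Fin n → ℚ) →ₗ[ℚ] ℚ))
    (φ : (Fin n → ℤ) → ℚ)
    (hφ : ∀ m : Fin n → ℤ,
      φ m = Finset.univ.sup' Finset.univ_nonempty (fun i => L i (fun j => (m j : ℚ))))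
    (P : AddSubmonoid ((Fin n → ℤ) × ℤ))
    (hP : ∀ p : (Fin n → ℤ) × ℤ, p ∈ P ↔ φ p.1 ≤ (p.2 : ℚ))
    (h01 : ((0 : Fin n → ℤ), (1 : ℤ)) ∈ P)
    (t : AddMonoidAlgebra ℂ P)
    (ht : t = AddMonoidAlgebra.single (⟨((0 : Fin n → ℤ), (1 : ℤ)), h01⟩ : P) 1) :
    ∀ p : P, IsNilpotent ((Ideal.Quotient.mk (Ideal.span {t}))
        (AddMonoidAlgebra.single p 1)) ↔
      φ (p : (Fin n → ℤ) × ℤ).1 < (((p : (Fin n → ℤ) × ℤ).2 : ℤ) : ℚ) := by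
  classical
  -- homogeneity of φ
  have hom : ∀ (k : ℕ) (m : Fin n → ℤ), φ (k • m) = (k : ℚ) * φ m := by
    intro k m
    rw [hφ, hφ]
    have hfun : (fun i => L i (fun j => (((k • m) j : ℤ) : ℚ)))
        = (fun x : ℚ => (k : ℚ) * x) ∘ (fun i => L i (fun j => ((m j : ℤ) : ℚ))) := by
      funext i
      have : (fun j => (((k • m) j : ℤ) : ℚ)) = (k : ℚ) • fun j => ((m j : ℤ) : ℚ) := by
        funext j; simp [mul_comm]
      rw [this, map_smul, smul_eq_mul]; rfl
    rw [hfun, ← Finset.comp_sup'_eq_sup'_comp _ (fun x : ℚ => (k : ℚ) * x)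
      (fun x y => mul_max_of_nonneg x y (by positivity))]
  -- key divisibility criterion
  have key : ∀ q : P, t ∣ (AddMonoidAlgebra.single q 1 : AddMonoidAlgebra ℂ P) ↔
      φ (q : (Fin n → ℤ) × ℤ).1 + 1 ≤ ((q : (Fin n → ℤ) × ℤ).2 : ℚ) := by
    intro q
    constructor
    · rintro ⟨a, ha⟩
      have hq : q ∈ (AddMonoidAlgebra.single q (1 : ℂ)).coeff.support := by
        simp [Finsupp.support_single_ne_zero]
      rw [ha, ht] at hq
      have := AddMonoidAlgebra.support_coeff_single_mul a (1 : ℂ)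
        (fun y => by simp) (⟨((0 : Fin n → ℤ), (1 : ℤ)), h01⟩ : P)
      rw [this, Finset.mem_map] at hq
      obtain ⟨r, hr, hrq⟩ := hq
      have hrP := (hP (r : (Fin n → ℤ) × ℤ)).mp r.2
      have h1 : ((0 : Fin n → ℤ), (1 : ℤ)) + (r : (Fin n → ℤ) × ℤ)
          = (q : (Fin n → ℤ) × ℤ) := congrArg Subtype.val hrq
      have h1' : (r : (Fin n → ℤ) × ℤ).1 = (q : (Fin n → ℤ) × ℤ).1 := by
        have := congrArg Prod.fst h1; simpa using this
      have h2' : 1 + (r : (Fin n → ℤ) × ℤ).2 = (q : (Fin n → ℤ) × ℤ).2 := by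
        have := congrArg Prod.snd h1; simpa using this
      rw [h1'] at hrP
      have : ((r : (Fin n → ℤ) × ℤ).2 : ℚ) + 1 = ((q : (Fin n → ℤ) × ℤ).2 : ℚ) := by
        rw [← h2']; push_cast; ring
      linarith
    · intro hq
      have hrP : ((q : (Fin n → ℤ) × ℤ).1, (q : (Fin n → ℤ) × ℤ).2 - 1) ∈ P := by
        rw [hP]; push_cast; linarith
      refine ⟨AddMonoidAlgebra.single (⟨_, hrP⟩ : P) 1, ?_⟩
      rw [ht, AddMonoidAlgebra.single_mul_single, mul_one]
      congr 1
      apply Subtype.ext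
      show (q : (Fin n → ℤ) × ℤ)
        = ((0 : Fin n → ℤ), (1 : ℤ)) + ((q : (Fin n → ℤ) × ℤ).1, (q : (Fin n → ℤ) × ℤ).2 - 1)
      ext <;> simp
  intro p
  set m := (p : (Fin n → ℤ) × ℤ).1 with hm
  set h := (p : (Fin n → ℤ) × ℤ).2 with hh
  -- coercion of k • p
  have hcoe : ∀ k : ℕ, ((k • p : P) : (Fin n → ℤ) × ℤ) = (k • m, k • h) := by
    intro k; rfl
  constructor
  · rintro ⟨k, hk⟩
    rw [← map_pow, AddMonoidAlgebra.single_pow, one_pow,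
      Ideal.Quotient.eq_zero_iff_mem, Ideal.mem_span_singleton, key, hcoe] at hk
    have hk' : (k : ℚ) * φ m + 1 ≤ (k : ℚ) * (h : ℚ) := by
      have := hk
      rw [hom] at this
      simp only [nsmul_eq_mul] at this
      push_cast at this
      linarith
    have hφ0 : φ 0 = 0 := by
      rw [hφ]
      have hz : (fun i : ι => L i fun j => (((0 : Fin n → ℤ) j : ℤ) : ℚ)) = fun _ => (0 : ℚ) := by
        funext i
        have h0 : (fun j => (((0 : Fin n → ℤ) j : ℤ) : ℚ)) = (0 : Fin n → ℚ) := by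
          funext j; simp
        rw [h0, map_zero]
      rw [hz, Finset.sup'_const]
    rcases Nat.eq_zero_or_pos k with hk0 | hk1
    · exfalso
      subst hk0
      simp [hφ0] at hk'
      linarith
    · have hk1' : (1 : ℚ) ≤ (k : ℚ) := by exact_mod_cast hk1
      nlinarith
  · intro hlt
    set d : ℚ := (h : ℚ) - φ m with hd
    have hd0 : 0 < d := by simp only [hd]; linarith
    refine ⟨⌈1 / d⌉₊, ?_⟩
    set k : ℕ := ⌈1 / d⌉₊ with hkdef
    have hkd : 1 ≤ (k : ℚ) * d := by
      have h1 : (1 : ℚ) / d ≤ (k : ℚ) := Nat.le_ceil _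
      calc (1 : ℚ) = (1 / d) * d := by field_simp
        _ ≤ (k : ℚ) * d := by exact mul_le_mul_of_nonneg_right h1 hd0.le
    rw [← map_pow, AddMonoidAlgebra.single_pow, one_pow,
      Ideal.Quotient.eq_zero_iff_mem, Ideal.mem_span_singleton]
    rw [key, hcoe]
    show φ (k • m) + 1 ≤ ((k • h : ℤ) : ℚ)
    rw [hom]
    simp only [nsmul_eq_mul]
    push_cast
    simp only [hd] at hkd
    nlinarith
end

section
/- For n ≥ 1, let φ : ℤ^n → ℚ be given by φ(m) = max_{i ∈ I} ⟨u_i, m⟩ for a finite nonempty family of linear forms u_i ∈ (ℚ^n)^*, let P = {(m,h) ∈ ℤ^n × ℤ : φ(m) ≤ h}, let A = AddMonoidAlgebra ℂ P, and let t = z^{(0,1)}. Then the images in A/(t) of the monomials z^{(m,h)} with (m,h) ∈ P satisfying φ(m) ≤ h < φ(m) + 1 form a ℂ-basis of the quotient ring A/(t). -/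
set_option maxHeartbeats 1000000
set_option synthInstance.maxHeartbeats 400000

/-- With `φ`, `P`, `A = ℂ[P]`, `t = z^{(0,1)}` as before, the classes in `A/(t)` of
the monomials `z^{(m,h)}`, `(m,h) ∈ P` with `φ(m) ≤ h < φ(m) + 1`, form a ℂ-basis of `A/(t)`. -/
theorem stmt_6 (n : ℕ) (hn : 1 ≤ n)
    (ι : Type) [Fintype ι] [Nonempty ι]
    (L : ι → ((Fin n → ℚ) →ₗ[ℚ] ℚ))
    (φ : (Fin n → ℤ) → ℚ)
    (hφ : ∀ m : Fin n → ℤ,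
      φ m = Finset.univ.sup' Finset.univ_nonempty (fun i => L i (fun j => (m j : ℚ))))
    (P : AddSubmonoid ((Fin n → ℤ) × ℤ))
    (hP : ∀ p : (Fin n → ℤ) × ℤ, p ∈ P ↔ φ p.1 ≤ (p.2 : ℚ))
    (h01 : ((0 : Fin n → ℤ), (1 : ℤ)) ∈ P)
    (t : AddMonoidAlgebra ℂ P)
    (ht : t = AddMonoidAlgebra.single (⟨((0 : Fin n → ℤ), (1 : ℤ)), h01⟩ : P) 1)
    (v : {p : P // ((((p : (Fin n → ℤ) × ℤ).2 : ℤ) : ℚ) < φ (p : (Fin n → ℤ) × ℤ).1 + 1)} →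
        AddMonoidAlgebra ℂ P ⧸ Ideal.span {t})
    (hv : ∀ q, v q = Ideal.Quotient.mk (Ideal.span {t}) (AddMonoidAlgebra.single q.val 1)) :
    LinearIndependent ℂ v ∧ Submodule.span ℂ (Set.range v) = ⊤ := by
  -- key support fact: multiplication by t lands outside the "fundamental" monomials
  have key : ∀ (a : AddMonoidAlgebra ℂ P) (q : P),
      ((((q : (Fin n → ℤ) × ℤ).2 : ℤ) : ℚ) < φ (q : (Fin n → ℤ) × ℤ).1 + 1) →
      (t * a).coeff q = 0 := by
    intro a q hq
    by_contra h
    have hmem : q ∈ (t * a).coeff.support := Finsupp.mem_support_iff.mpr h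
    have := AddMonoidAlgebra.support_coeff_mul_subset t a hmem
    rw [Finset.mem_add] at this
    obtain ⟨y, hy, z, hz, hyz⟩ := this
    have hys : y = (⟨((0 : Fin n → ℤ), (1 : ℤ)), h01⟩ : P) := by
      have := Finsupp.support_single_subset (by rw [ht, AddMonoidAlgebra.coeff_single] at hy; exact hy)
      simpa using this
    subst hys
    have hzP : φ (z : (Fin n → ℤ) × ℤ).1 ≤ ((z : (Fin n → ℤ) × ℤ).2 : ℚ) :=
      (hP _).mp z.2
    have hco : (q : (Fin n → ℤ) × ℤ) = ((0 : Fin n → ℤ), (1 : ℤ)) + (z : (Fin n → ℤ) × ℤ) := by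
      rw [← hyz]; rfl
    have h1 : (q : (Fin n → ℤ) × ℤ).1 = (z : (Fin n → ℤ) × ℤ).1 := by
      rw [hco]; simp
    have h2 : (q : (Fin n → ℤ) × ℤ).2 = 1 + (z : (Fin n → ℤ) × ℤ).2 := by
      rw [hco]; rfl
    rw [h1, h2] at hq
    push_cast at hq
    linarith
  have smul_mk : ∀ (c : ℂ) (u : AddMonoidAlgebra ℂ P),
      Ideal.Quotient.mk (Ideal.span {t}) (c • u)
        = c • Ideal.Quotient.mk (Ideal.span {t}) u := by
    intro c u
    simpa only [Ideal.Quotient.mkₐ_eq_mk] using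
      map_smul (Ideal.Quotient.mkₐ ℂ (Ideal.span {t})) c u
  constructor
  · rw [linearIndependent_iff]
    intro l hl
    rw [Finsupp.linearCombination_apply] at hl
    have hl' : Ideal.Quotient.mk (Ideal.span {t}) (AddMonoidAlgebra.ofCoeff (Finsupp.mapDomain Subtype.val l)) = 0 := by
      rw [Finsupp.mapDomain, AddMonoidAlgebra.ofCoeff_finsuppSum, map_finsuppSum, ← hl]
      apply Finsupp.sum_congr
      intro q hq
      rw [hv q, ← smul_mk]
      congr 1
      rw [AddMonoidAlgebra.smul_single', mul_one]; rfl
    have hmem : AddMonoidAlgebra.ofCoeff (Finsupp.mapDomain Subtype.val l) ∈ Ideal.span {t} :=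
      Ideal.Quotient.eq_zero_iff_mem.mp hl'
    obtain ⟨a, ha⟩ := Ideal.mem_span_singleton.mp hmem
    ext q
    have h1 : Finsupp.mapDomain Subtype.val l q.val = l q :=
      Finsupp.mapDomain_apply Subtype.val_injective l q
    have h2 : (0 : ℂ) = Finsupp.mapDomain Subtype.val l q.val := by
      rw [← AddMonoidAlgebra.coeff_ofCoeff (Finsupp.mapDomain Subtype.val l), ha]; exact (key a q.val q.2).symm
    rw [Finsupp.coe_zero, Pi.zero_apply, ← h1, ← h2]
  · have hmk_single : ∀ p : P,
        Ideal.Quotient.mk (Ideal.span {t}) (AddMonoidAlgebra.single p (1 : ℂ))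
          ∈ Submodule.span ℂ (Set.range v) := by
      intro p
      by_cases hp : ((((p : (Fin n → ℤ) × ℤ).2 : ℤ) : ℚ) < φ (p : (Fin n → ℤ) × ℤ).1 + 1)
      · rw [← hv ⟨p, hp⟩]
        exact Submodule.subset_span (Set.mem_range_self _)
      · push_neg at hp
        have hq' : φ ((p : (Fin n → ℤ) × ℤ).1, (p : (Fin n → ℤ) × ℤ).2 - 1).1
            ≤ ((((p : (Fin n → ℤ) × ℤ).1, (p : (Fin n → ℤ) × ℤ).2 - 1) :
                (Fin n → ℤ) × ℤ).2 : ℚ) := by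
          push_cast
          linarith
        have hqP : ((p : (Fin n → ℤ) × ℤ).1, (p : (Fin n → ℤ) × ℤ).2 - 1) ∈ P := (hP _).mpr hq'
        have hsum : (⟨((0 : Fin n → ℤ), (1 : ℤ)), h01⟩ : P) + (⟨_, hqP⟩ : P) = p := by
          apply Subtype.ext
          show ((0 : Fin n → ℤ), (1 : ℤ)) + _ = (p : (Fin n → ℤ) × ℤ)
          ext x
          · simp
          · simp
        have heq : (AddMonoidAlgebra.single p (1 : ℂ) : AddMonoidAlgebra ℂ P)
            = t * AddMonoidAlgebra.single (⟨_, hqP⟩ : P) 1 := by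
          rw [ht, AddMonoidAlgebra.single_mul_single, one_mul, hsum]
        rw [heq, map_mul]
        have htz : Ideal.Quotient.mk (Ideal.span {t}) t = 0 :=
          Ideal.Quotient.eq_zero_iff_mem.mpr (Ideal.subset_span rfl)
        rw [htz, zero_mul]
        exact Submodule.zero_mem _
    rw [eq_top_iff]
    rintro x -
    obtain ⟨y, rfl⟩ := Ideal.Quotient.mk_surjective x
    induction y using AddMonoidAlgebra.induction_on with
    | of g =>
      simpa [AddMonoidAlgebra.of_apply] using hmk_single g
    | add f g hf hg =>
      rw [map_add]
      exact Submodule.add_mem _ hf hg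
    | smul c f hf =>
      rw [smul_mk]
      exact Submodule.smul_mem _ _ hf
end

section
/- For n ≥ 1, let φ : ℤ^n → ℚ be given by φ(m) = max_{i ∈ I} ⟨u_i, m⟩ for a finite nonempty family of linear forms u_i ∈ (ℚ^n)^*, and assume additionally that φ(m) ∈ ℤ for every m ∈ ℤ^n. Let P = {(m,h) ∈ ℤ^n × ℤ : φ(m) ≤ h}, A = AddMonoidAlgebra ℂ P, and t = z^{(0,1)}. Then for all m, m' ∈ ℤ^n, in the quotient ring A/(t) the product of the classes of z^{(m,φ(m))} and z^{(m',φ(m'))} equals the class of z^{(m+m',φ(m+m'))} if φ(m+m') = φ(m) + φ(m'), and equals 0 otherwise. -/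
/-- With `φ`, `P`, `A = ℂ[P]`, `t = z^{(0,1)}` as before, and assuming `φ` takes
integral values on `ℤ^n`, in `A/(t)` the product of the classes of `z^{(m,φ(m))}` and
`z^{(m',φ(m'))}` is the class of `z^{(m+m',φ(m+m'))}` if `φ(m+m') = φ(m) + φ(m')`, and `0`
otherwise. -/
theorem stmt_7 (n : ℕ) (hn : 1 ≤ n)
    (ι : Type) [Fintype ι] [Nonempty ι]
    (L : ι → ((Fin n → ℚ) →ₗ[ℚ] ℚ))
    (φ : (Fin n → ℤ) → ℚ)
    (hφ : ∀ m : Fin n → ℤ,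
      φ m = Finset.univ.sup' Finset.univ_nonempty (fun i => L i (fun j => (m j : ℚ))))
    (hint : ∀ m : Fin n → ℤ, ∃ km : ℤ, φ m = (km : ℚ))
    (P : AddSubmonoid ((Fin n → ℤ) × ℤ))
    (hP : ∀ p : (Fin n → ℤ) × ℤ, p ∈ P ↔ φ p.1 ≤ (p.2 : ℚ))
    (h01 : ((0 : Fin n → ℤ), (1 : ℤ)) ∈ P)
    (t : AddMonoidAlgebra ℂ P)
    (ht : t = AddMonoidAlgebra.single (⟨((0 : Fin n → ℤ), (1 : ℤ)), h01⟩ : P) 1)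
    (m m' : Fin n → ℤ) (km km' ks : ℤ)
    (hkm : (km : ℚ) = φ m) (hkm' : (km' : ℚ) = φ m') (hks : (ks : ℚ) = φ (m + m'))
    (pm : (m, km) ∈ P) (pm' : (m', km') ∈ P) (ps : (m + m', ks) ∈ P) :
    (Ideal.Quotient.mk (Ideal.span {t}) (AddMonoidAlgebra.single (⟨(m, km), pm⟩ : P) 1)) *
        (Ideal.Quotient.mk (Ideal.span {t}) (AddMonoidAlgebra.single (⟨(m', km'), pm'⟩ : P) 1)) =
      if φ (m + m') = φ m + φ m' then
        Ideal.Quotient.mk (Ideal.span {t}) (AddMonoidAlgebra.single (⟨(m + m', ks), ps⟩ : P) 1)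
      else 0 := by
  rw [← map_mul, AddMonoidAlgebra.single_mul_single, one_mul]
  by_cases h : φ (m + m') = φ m + φ m'
  · rw [if_pos h]
    have hk : km + km' = ks := by
      have : ((km + km' : ℤ) : ℚ) = ((ks : ℤ) : ℚ) := by
        push_cast; rw [hkm, hkm', hks, h]
      exact_mod_cast this
    congr 2
    apply Subtype.ext
    show ((m, km) + (m', km') : (Fin n → ℤ) × ℤ) = (m + m', ks)
    simp [Prod.ext_iff, hk]
  · rw [if_neg h, Ideal.Quotient.eq_zero_iff_mem, Ideal.mem_span_singleton]
    have hlt : φ (m + m') < φ m + φ m' := by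
      refine lt_of_le_of_ne ?_ h
      rw [hφ (m + m'), hφ m, hφ m']
      apply Finset.sup'_le
      intro i _
      have hfun : (fun j => (((m + m') j : ℤ) : ℚ)) =
          (fun j => ((m j : ℤ) : ℚ)) + (fun j => ((m' j : ℤ) : ℚ)) := by
        funext j; push_cast; simp
      rw [hfun, map_add]
      gcongr
      · exact Finset.le_sup' (fun i => (L i) fun j => ((m j : ℤ) : ℚ)) (Finset.mem_univ i)
      · exact Finset.le_sup' (fun i => (L i) fun j => ((m' j : ℤ) : ℚ)) (Finset.mem_univ i)
    have hks' : ks < km + km' := by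
      have h2 : (ks : ℚ) < (km : ℚ) + (km' : ℚ) := by
        rw [hks, hkm, hkm']; exact hlt
      exact_mod_cast h2
    have hmem : (m + m', km + km' - 1) ∈ P := by
      rw [hP]
      have h3 : ks + 1 ≤ km + km' := hks'
      have h4 : ((ks : ℤ) : ℚ) ≤ ((km + km' - 1 : ℤ) : ℚ) := by exact_mod_cast by linarith
      calc φ ((m + m', km + km' - 1).1) = (ks : ℚ) := hks.symm
        _ ≤ _ := h4
    refine ⟨AddMonoidAlgebra.single (⟨(m + m', km + km' - 1), hmem⟩ : P) 1, ?_⟩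
    rw [ht, AddMonoidAlgebra.single_mul_single, one_mul]
    congr 1
    apply Subtype.ext
    show ((m, km) + (m', km') : (Fin n → ℤ) × ℤ) =
      ((0 : Fin n → ℤ), (1 : ℤ)) + (m + m', km + km' - 1)
    simp [Prod.ext_iff]
end

section
/- For n ≥ 1, let φ : ℤ^n → ℚ be given by φ(m) = max_{i ∈ I} ⟨u_i, m⟩ for a finite nonempty family of linear forms u_i ∈ (ℚ^n)^*, let P = {(m,h) ∈ ℤ^n × ℤ : φ(m) ≤ h}, let A = AddMonoidAlgebra ℂ P, and let t = z^{(0,1)}. Then the quotient ring A/(t) is reduced (has no nonzero nilpotent elements) if and only if φ(m) ∈ ℤ for every m ∈ ℤ^n. -/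
set_option linter.unusedSectionVars false

open AddMonoidAlgebra Finset

namespace Stmt8

variable {n : ℕ} {ι : Type} [Fintype ι] [Nonempty ι]

/-- The Laurent polynomial ring target. -/
noncomputable abbrev B (n : ℕ) : Type := AddMonoidAlgebra ℂ (Fin n → ℤ)

/-- The linear form evaluated on integer vectors. -/
def g (L : ι → ((Fin n → ℚ) →ₗ[ℚ] ℚ)) (i : ι) (m : Fin n → ℤ) : ℚ :=
  L i (fun j => (m j : ℚ))

lemma g_zero (L : ι → ((Fin n → ℚ) →ₗ[ℚ] ℚ)) (i : ι) : g L i 0 = 0 := by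
  unfold g
  rw [show (fun j => (((0 : Fin n → ℤ) j : ℤ) : ℚ)) = (0 : Fin n → ℚ) from funext fun j => by
    simp, map_zero]

lemma g_add (L : ι → ((Fin n → ℚ) →ₗ[ℚ] ℚ)) (i : ι) (m m' : Fin n → ℤ) :
    g L i (m + m') = g L i m + g L i m' := by
  unfold g
  rw [show (fun j => (((m + m') j : ℤ) : ℚ))
      = (fun j => ((m j : ℤ) : ℚ)) + (fun j => ((m' j : ℤ) : ℚ)) from funext fun j => by
    simp [Pi.add_apply], map_add]

lemma g_smul (L : ι → ((Fin n → ℚ) →ₗ[ℚ] ℚ)) (i : ι) (k : ℕ) (m : Fin n → ℤ) :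
    g L i (k • m) = (k : ℚ) * g L i m := by
  unfold g
  rw [show (fun j => (((k • m) j : ℤ) : ℚ)) = (k : ℚ) • (fun j => ((m j : ℤ) : ℚ)) from
    funext fun j => by simp [Pi.smul_apply], map_smul, smul_eq_mul]

end Stmt8

section Main

open Stmt8

variable {n : ℕ} {ι : Type} [Fintype ι] [Nonempty ι]
variable (L : ι → ((Fin n → ℚ) →ₗ[ℚ] ℚ)) (φ : (Fin n → ℤ) → ℚ)
variable (P : AddSubmonoid ((Fin n → ℤ) × ℤ))

lemma g_le_phi (hφ : ∀ m : Fin n → ℤ,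
      φ m = Finset.univ.sup' Finset.univ_nonempty (fun i => L i (fun j => (m j : ℚ))))
    (i : ι) (m : Fin n → ℤ) : g L i m ≤ φ m := by
  rw [hφ]
  exact Finset.le_sup' (fun i => L i (fun j => ((m j : ℤ) : ℚ))) (Finset.mem_univ i)

lemma exists_g_eq_phi (hφ : ∀ m : Fin n → ℤ,
      φ m = Finset.univ.sup' Finset.univ_nonempty (fun i => L i (fun j => (m j : ℚ))))
    (m : Fin n → ℤ) : ∃ i : ι, g L i m = φ m := by
  obtain ⟨i, -, hi⟩ := Finset.exists_mem_eq_sup' (s := (Finset.univ : Finset ι))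
    (Finset.univ_nonempty) (fun i => L i (fun j => ((m j : ℤ) : ℚ)))
  exact ⟨i, by rw [hφ]; exact hi.symm⟩

lemma phi_smul (hφ : ∀ m : Fin n → ℤ,
      φ m = Finset.univ.sup' Finset.univ_nonempty (fun i => L i (fun j => (m j : ℚ))))
    (k : ℕ) (m : Fin n → ℤ) : φ (k • m) = (k : ℚ) * φ m := by
  rw [hφ, hφ]
  have hcomp := Finset.comp_sup'_eq_sup'_comp (Finset.univ_nonempty (α := ι))
      (f := fun i => L i (fun j => ((m j : ℤ) : ℚ))) (fun q => (k : ℚ) * q)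
      (fun x y => mul_max_of_nonneg x y (by positivity))
  have h2 : (Finset.univ.sup' Finset.univ_nonempty fun i => L i fun j => (((k • m) j : ℤ) : ℚ))
      = Finset.univ.sup' Finset.univ_nonempty
        ((fun q => (k : ℚ) * q) ∘ fun i => L i fun j => ((m j : ℤ) : ℚ)) := by
    apply Finset.sup'_congr _ rfl
    intro i _
    simpa [Function.comp, g] using (g_smul L i k m)
  exact h2.trans hcomp.symm

/-- The basic multiplicative map `P → B n`. -/
noncomputable def fP (i : ι) (p : P) : B n :=
  if g L i (p : (Fin n → ℤ) × ℤ).1 = ((p : (Fin n → ℤ) × ℤ).2 : ℚ)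
  then AddMonoidAlgebra.single (p : (Fin n → ℤ) × ℤ).1 1 else 0

lemma fP_mul
    (hφ : ∀ m : Fin n → ℤ,
      φ m = Finset.univ.sup' Finset.univ_nonempty (fun i => L i (fun j => (m j : ℚ))))
    (hP : ∀ p : (Fin n → ℤ) × ℤ, p ∈ P ↔ φ p.1 ≤ (p.2 : ℚ))
    (i : ι) (a b : P) :
    fP L P i (a + b) = fP L P i a * fP L P i b := by
  have ha : g L i (a : (Fin n → ℤ) × ℤ).1 ≤ ((a : (Fin n → ℤ) × ℤ).2 : ℚ) :=
    (g_le_phi L φ hφ i _).trans ((hP _).1 a.2)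
  have hb : g L i (b : (Fin n → ℤ) × ℤ).1 ≤ ((b : (Fin n → ℤ) × ℤ).2 : ℚ) :=
    (g_le_phi L φ hφ i _).trans ((hP _).1 b.2)
  have hco : ((a + b : P) : (Fin n → ℤ) × ℤ) = (a : (Fin n → ℤ) × ℤ) + (b : (Fin n → ℤ) × ℤ) := rfl
  by_cases hca : g L i (a : (Fin n → ℤ) × ℤ).1 = ((a : (Fin n → ℤ) × ℤ).2 : ℚ)
  · by_cases hcb : g L i (b : (Fin n → ℤ) × ℤ).1 = ((b : (Fin n → ℤ) × ℤ).2 : ℚ)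
    · have hsum : g L i ((a + b : P) : (Fin n → ℤ) × ℤ).1
          = (((a + b : P) : (Fin n → ℤ) × ℤ).2 : ℚ) := by
        rw [hco]; show g L i (_ + _) = _
        rw [g_add, hca, hcb]; push_cast [Prod.snd_add]; ring
      rw [fP, fP, fP, if_pos hca, if_pos hcb, if_pos hsum,
        AddMonoidAlgebra.single_mul_single, one_mul, hco]
      rfl
    · have hsum : ¬ (g L i ((a + b : P) : (Fin n → ℤ) × ℤ).1
          = (((a + b : P) : (Fin n → ℤ) × ℤ).2 : ℚ)) := by
        rw [hco]; show ¬ (g L i (_ + _) = _)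
        rw [g_add]
        push_cast [Prod.snd_add]
        intro h
        exact hcb (le_antisymm hb (by linarith [lt_of_le_of_ne hb hcb, ha]))
      rw [fP, fP, fP, if_neg hsum, if_neg hcb, mul_zero]
  · have hsum : ¬ (g L i ((a + b : P) : (Fin n → ℤ) × ℤ).1
        = (((a + b : P) : (Fin n → ℤ) × ℤ).2 : ℚ)) := by
      rw [hco]; show ¬ (g L i (_ + _) = _)
      rw [g_add]
      push_cast [Prod.snd_add]
      intro h
      exact hca (le_antisymm ha (by linarith [lt_of_le_of_ne ha hca, hb]))
    rw [fP, fP, fP, if_neg hsum, if_neg hca, zero_mul]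

/-- The monoid hom `Multiplicative P →* B n`. -/
noncomputable def Fi
    (hφ : ∀ m : Fin n → ℤ,
      φ m = Finset.univ.sup' Finset.univ_nonempty (fun i => L i (fun j => (m j : ℚ))))
    (hP : ∀ p : (Fin n → ℤ) × ℤ, p ∈ P ↔ φ p.1 ≤ (p.2 : ℚ))
    (i : ι) : Multiplicative P →* B n where
  toFun p := fP L P i (Multiplicative.toAdd p)
  map_one' := by
    show fP L P i (0 : P) = 1
    rw [fP]
    rw [if_pos (by simp [g_zero, AddSubmonoid.coe_zero])]
    simp [AddSubmonoid.coe_zero, AddMonoidAlgebra.one_def]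
  map_mul' p q := fP_mul L φ P hφ hP i (Multiplicative.toAdd p) (Multiplicative.toAdd q)

/-- The algebra hom. -/
noncomputable def Pii
    (hφ : ∀ m : Fin n → ℤ,
      φ m = Finset.univ.sup' Finset.univ_nonempty (fun i => L i (fun j => (m j : ℚ))))
    (hP : ∀ p : (Fin n → ℤ) × ℤ, p ∈ P ↔ φ p.1 ≤ (p.2 : ℚ))
    (i : ι) : AddMonoidAlgebra ℂ P →ₐ[ℂ] B n :=
  (AddMonoidAlgebra.lift ℂ (B n) P) (Fi L φ P hφ hP i)

lemma Pii_coeff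
    (hφ : ∀ m : Fin n → ℤ,
      φ m = Finset.univ.sup' Finset.univ_nonempty (fun i => L i (fun j => (m j : ℚ))))
    (hP : ∀ p : (Fin n → ℤ) × ℤ, p ∈ P ↔ φ p.1 ≤ (p.2 : ℚ))
    (i : ι) (x : AddMonoidAlgebra ℂ P) (p₀ : P)
    (hcond : g L i (p₀ : (Fin n → ℤ) × ℤ).1 = ((p₀ : (Fin n → ℤ) × ℤ).2 : ℚ)) :
    (Pii L φ P hφ hP i x).coeff (p₀ : (Fin n → ℤ) × ℤ).1 = x.coeff p₀ := by
  classical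
  conv_lhs => rw [← AddMonoidAlgebra.sum_coeff_single x]
  rw [map_finsuppSum, AddMonoidAlgebra.coeff_finsuppSum, Finsupp.sum_apply]
  rw [Finsupp.sum]
  have hterm : ∀ a ∈ x.coeff.support,
      (Pii L φ P hφ hP i (AddMonoidAlgebra.single a (x.coeff a))).coeff (p₀ : (Fin n → ℤ) × ℤ).1
      = if a = p₀ then x.coeff p₀ else 0 := by
    intro a _
    rw [Pii, AddMonoidAlgebra.lift_single]
    have : (Fi L φ P hφ hP i) (Multiplicative.ofAdd a) = fP L P i a := rfl
    rw [this]
    by_cases hc : g L i (a : (Fin n → ℤ) × ℤ).1 = ((a : (Fin n → ℤ) × ℤ).2 : ℚ)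
    · rw [fP, if_pos hc]
      by_cases hap : a = p₀
      · subst hap
        simp [AddMonoidAlgebra.coeff_smul, AddMonoidAlgebra.coeff_single, Finsupp.single_apply]
      · rw [if_neg hap]
        have hne : (a : (Fin n → ℤ) × ℤ).1 ≠ (p₀ : (Fin n → ℤ) × ℤ).1 := by
          intro h1
          apply hap
          apply Subtype.ext
          apply Prod.ext h1
          have : ((a : (Fin n → ℤ) × ℤ).2 : ℚ) = ((p₀ : (Fin n → ℤ) × ℤ).2 : ℚ) := by
            rw [← hc, ← hcond, h1]
          exact_mod_cast this
        simp [AddMonoidAlgebra.coeff_smul, AddMonoidAlgebra.coeff_single, Finsupp.single_apply, hne]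
    · rw [fP, if_neg hc, smul_zero]
      rw [show ((0 : B n).coeff (p₀ : (Fin n → ℤ) × ℤ).1) = 0 from rfl]
      rw [if_neg]
      rintro rfl
      exact hc hcond
  rw [Finset.sum_congr rfl hterm, Finset.sum_ite_eq']
  by_cases hmem : p₀ ∈ x.coeff.support
  · rw [if_pos hmem]
  · rw [if_neg hmem, eq_comm, ← Finsupp.notMem_support_iff]; exact hmem

end Main

set_option maxHeartbeats 1000000 in
set_option synthInstance.maxHeartbeats 200000 in
open Stmt8 in
/-- With `φ`, `P`, `A = ℂ[P]`, `t = z^{(0,1)}` as before, the quotient ring `A/(t)`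
is reduced iff `φ(m) ∈ ℤ` for every `m ∈ ℤ^n`. -/
theorem stmt_8 (n : ℕ) (hn : 1 ≤ n)
    (ι : Type) [Fintype ι] [Nonempty ι]
    (L : ι → ((Fin n → ℚ) →ₗ[ℚ] ℚ))
    (φ : (Fin n → ℤ) → ℚ)
    (hφ : ∀ m : Fin n → ℤ,
      φ m = Finset.univ.sup' Finset.univ_nonempty (fun i => L i (fun j => (m j : ℚ))))
    (P : AddSubmonoid ((Fin n → ℤ) × ℤ))
    (hP : ∀ p : (Fin n → ℤ) × ℤ, p ∈ P ↔ φ p.1 ≤ (p.2 : ℚ))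
    (h01 : ((0 : Fin n → ℤ), (1 : ℤ)) ∈ P)
    (t : AddMonoidAlgebra ℂ P)
    (ht : t = AddMonoidAlgebra.single (⟨((0 : Fin n → ℤ), (1 : ℤ)), h01⟩ : P) 1) :
    IsReduced (AddMonoidAlgebra ℂ P ⧸ Ideal.span {t}) ↔
      ∀ m : Fin n → ℤ, ∃ km : ℤ, φ m = (km : ℚ) := by
  classical
  set s : P := (⟨((0 : Fin n → ℤ), (1 : ℤ)), h01⟩ : P) with hs
  constructor
  · -- reduced → integer valued
    intro hred
    by_contra hni
    push_neg at hni
    obtain ⟨m₀, hm₀⟩ := hni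
    set h : ℤ := ⌈φ m₀⌉ with hh
    have hle : φ m₀ ≤ (h : ℚ) := Int.le_ceil _
    have hlt : φ m₀ < (h : ℚ) := lt_of_le_of_ne hle (hm₀ h)
    have hceil : (h : ℚ) < φ m₀ + 1 := Int.ceil_lt_add_one _
    have hmem : ((m₀, h) : (Fin n → ℤ) × ℤ) ∈ P := (hP _).2 hle
    set p₀ : P := ⟨(m₀, h), hmem⟩ with hp₀
    set x : AddMonoidAlgebra ℂ P := AddMonoidAlgebra.single p₀ 1 with hx
    set q : AddMonoidAlgebra ℂ P →+* AddMonoidAlgebra ℂ P ⧸ Ideal.span {t} :=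
      Ideal.Quotient.mk (Ideal.span {t}) with hq
    have hx0 : q x ≠ 0 := by
      rw [hq, Ne, Ideal.Quotient.eq_zero_iff_mem, Ideal.mem_span_singleton]
      rintro ⟨y, hy⟩
      have hco := congrArg (fun z : AddMonoidAlgebra ℂ P => z.coeff p₀) hy
      have hx1 : x.coeff p₀ = 1 := by
        rw [hx]; exact Finsupp.single_eq_same
      have hty : (t * y).coeff p₀ = 0 := by
        rw [ht, AddMonoidAlgebra.coeff_mul, AddMonoidAlgebra.coeff_single, Finsupp.sum_single_index (by simp)]
        rw [Finsupp.sum]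
        apply Finset.sum_eq_zero
        intro a₂ _
        rw [if_neg]
        intro e
        have hc2 := congrArg (fun z : P => ((z : (Fin n → ℤ) × ℤ)).2) e
        have hc1 := congrArg (fun z : P => ((z : (Fin n → ℤ) × ℤ)).1) e
        simp only [AddSubmonoid.coe_add] at hc1 hc2
        have h1 : (a₂ : (Fin n → ℤ) × ℤ).1 = m₀ := by
          simpa [hs, hp₀] using hc1
        have h2 : (a₂ : (Fin n → ℤ) × ℤ).2 = h - 1 := by
          have : 1 + (a₂ : (Fin n → ℤ) × ℤ).2 = h := by simpa [hs, hp₀] using hc2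
          omega
        have hmem2 := (hP _).1 a₂.2
        rw [h1, h2] at hmem2
        push_cast at hmem2
        linarith
      rw [hx1, hty] at hco
      exact one_ne_zero hco
    -- nilpotency
    obtain ⟨k, hk⟩ := exists_nat_ge ((1 : ℚ) / ((h : ℚ) - φ m₀))
    have hε : (0 : ℚ) < (h : ℚ) - φ m₀ := by linarith
    have hk1 : 1 ≤ (k : ℚ) * ((h : ℚ) - φ m₀) := by
      rw [div_le_iff₀ hε] at hk
      linarith
    have hqmem : ((k • m₀, k * h - 1) : (Fin n → ℤ) × ℤ) ∈ P := by
      apply (hP _).2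
      have := phi_smul L φ hφ k m₀
      show φ (k • m₀) ≤ ((k * h - 1 : ℤ) : ℚ)
      rw [this]
      push_cast
      nlinarith
    set qq : P := ⟨(k • m₀, k * h - 1), hqmem⟩ with hqq
    have hxk : x ^ k = AddMonoidAlgebra.single (k • p₀) 1 := by
      rw [hx, AddMonoidAlgebra.single_pow, one_pow]
    have hdvd : t ∣ x ^ k := by
      refine ⟨AddMonoidAlgebra.single qq 1, ?_⟩
      rw [hxk, ht, AddMonoidAlgebra.single_mul_single, one_mul]
      congr 1
      apply Subtype.ext
      show (k • p₀ : P).val = s.val + qq.val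
      rw [show (k • p₀ : P).val = k • (p₀.val) from rfl]
      apply Prod.ext
      · show k • m₀ = 0 + k • m₀
        rw [zero_add]
      · show k • h = 1 + (k * h - 1)
        rw [nsmul_eq_mul]
        push_cast
        ring
    have hnil : IsNilpotent (q x) := by
      refine ⟨k, ?_⟩
      rw [← map_pow, hq, Ideal.Quotient.eq_zero_iff_mem, Ideal.mem_span_singleton]
      exact hdvd
    exact hx0 (hnil.eq_zero)
  · -- integer valued → reduced
    intro hint
    set Pr : AddMonoidAlgebra ℂ P →+* (ι → B n) :=
      Pi.ringHom (fun i => (Pii L φ P hφ hP i).toRingHom) with hPr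
    have hPrt : Pr t = 0 := by
      funext i
      show (Pii L φ P hφ hP i) t = 0
      rw [ht, Pii, AddMonoidAlgebra.lift_single, one_smul]
      show fP L P i s = 0
      rw [fP, if_neg]
      show ¬ (g L i (0 : Fin n → ℤ) = ((1 : ℤ) : ℚ))
      rw [g_zero]
      norm_num
    have hspan : ∀ a ∈ Ideal.span {t}, Pr a = 0 := by
      intro a ha
      obtain ⟨c, rfl⟩ := Ideal.mem_span_singleton.1 ha
      rw [map_mul, hPrt, zero_mul]
    have hker : ∀ a : AddMonoidAlgebra ℂ P, Pr a = 0 → a ∈ Ideal.span {t} := by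
      intro a ha
      rw [Ideal.mem_span_singleton]
      have hsupp : ∀ p ∈ a.coeff.support, ∃ qq : P, s + qq = p := by
        intro p hp
        have hmemP : φ (p : (Fin n → ℤ) × ℤ).1 ≤ ((p : (Fin n → ℤ) × ℤ).2 : ℚ) := (hP _).1 p.2
        by_cases heq : φ (p : (Fin n → ℤ) × ℤ).1 = ((p : (Fin n → ℤ) × ℤ).2 : ℚ)
        · exfalso
          obtain ⟨i, hi⟩ := exists_g_eq_phi L φ hφ (p : (Fin n → ℤ) × ℤ).1
          have hc := Pii_coeff L φ P hφ hP i a p (hi.trans heq)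
          have hzero : (Pii L φ P hφ hP i) a = 0 := by
            have : Pr a i = 0 := by rw [ha]; rfl
            exact this
          rw [hzero] at hc
          exact (Finsupp.mem_support_iff.1 hp) (by simpa using hc.symm)
        · obtain ⟨km, hkm⟩ := hint (p : (Fin n → ℤ) × ℤ).1
          have hlt : φ (p : (Fin n → ℤ) × ℤ).1 < ((p : (Fin n → ℤ) × ℤ).2 : ℚ) :=
            lt_of_le_of_ne hmemP heq
          have hklt : km < (p : (Fin n → ℤ) × ℤ).2 := by
            rw [hkm] at hlt
            exact_mod_cast hlt
          have hq2 : ((p : (Fin n → ℤ) × ℤ).1, (p : (Fin n → ℤ) × ℤ).2 - 1) ∈ P := by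
            apply (hP _).2
            show φ (p : (Fin n → ℤ) × ℤ).1 ≤ (((p : (Fin n → ℤ) × ℤ).2 - 1 : ℤ) : ℚ)
            rw [hkm]
            exact_mod_cast (by omega : km ≤ (p : (Fin n → ℤ) × ℤ).2 - 1)
          refine ⟨⟨((p : (Fin n → ℤ) × ℤ).1, (p : (Fin n → ℤ) × ℤ).2 - 1), hq2⟩, ?_⟩
          apply Subtype.ext
          show ((0 : Fin n → ℤ), (1 : ℤ)) + ((p : (Fin n → ℤ) × ℤ).1, (p : (Fin n → ℤ) × ℤ).2 - 1)
              = (p : (Fin n → ℤ) × ℤ)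
          apply Prod.ext
          · show 0 + (p : (Fin n → ℤ) × ℤ).1 = (p : (Fin n → ℤ) × ℤ).1
            rw [zero_add]
          · show 1 + ((p : (Fin n → ℤ) × ℤ).2 - 1) = (p : (Fin n → ℤ) × ℤ).2
            ring
      conv_rhs => rw [← AddMonoidAlgebra.sum_coeff_single a]
      rw [Finsupp.sum]
      apply Finset.dvd_sum
      intro p hp
      obtain ⟨qq, hqe⟩ := hsupp p hp
      exact ⟨AddMonoidAlgebra.single qq (a.coeff p), by
        rw [ht, AddMonoidAlgebra.single_mul_single, one_mul, hqe]⟩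
    set G := Ideal.Quotient.lift (Ideal.span {t}) Pr hspan with hG
    have hinj : Function.Injective G := by
      intro a b hab
      obtain ⟨a', rfl⟩ := Ideal.Quotient.mk_surjective a
      obtain ⟨b', rfl⟩ := Ideal.Quotient.mk_surjective b
      rw [hG, Ideal.Quotient.lift_mk, Ideal.Quotient.lift_mk] at hab
      rw [Ideal.Quotient.mk_eq_mk_iff_sub_mem]
      apply hker
      rw [map_sub, hab, sub_self]
    exact isReduced_of_injective G hinj
end

section
/- For n ≥ 1, let φ : ℤ^n → ℚ be given by φ(m) = max_{i ∈ I} ⟨u_i, m⟩ for a finite nonempty family of linear forms u_i ∈ (ℚ^n)^*, let P = {(m,h) ∈ ℤ^n × ℤ : φ(m) ≤ h}, let A = AddMonoidAlgebra ℂ P, and let t = z^{(0,1)}. Let B = AddMonoidAlgebra ℂ (ℤ^n × ℤ) be the Laurent polynomial algebra on the full lattice, and let j : A → B be the ℂ-algebra homomorphism induced by the inclusion P ⊆ ℤ^n × ℤ. Then B, via j, is the localization of A away from t: IsLocalization.Away t B holds. (Geometrically: inverting t on the toric local model of the degeneration yields the algebraic torus times the punctured line.) -/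
open AddMonoidAlgebra Finsupp

/-- With `φ`, `P`, `A = ℂ[P]`, `t = z^{(0,1)}` as before, the Laurent polynomial
algebra `B = ℂ[ℤ^n × ℤ]`, with the algebra structure given by the ℂ-algebra map `j` induced by
the inclusion `P ⊆ ℤ^n × ℤ`, is the localization of `A` away from `t`. -/
theorem stmt_9 (n : ℕ) (hn : 1 ≤ n)
    (ι : Type) [Fintype ι] [Nonempty ι]
    (L : ι → ((Fin n → ℚ) →ₗ[ℚ] ℚ))
    (φ : (Fin n → ℤ) → ℚ)
    (hφ : ∀ m : Fin n → ℤ,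
      φ m = Finset.univ.sup' Finset.univ_nonempty (fun i => L i (fun j => (m j : ℚ))))
    (P : AddSubmonoid ((Fin n → ℤ) × ℤ))
    (hP : ∀ p : (Fin n → ℤ) × ℤ, p ∈ P ↔ φ p.1 ≤ (p.2 : ℚ))
    (h01 : ((0 : Fin n → ℤ), (1 : ℤ)) ∈ P)
    (t : AddMonoidAlgebra ℂ P)
    (ht : t = AddMonoidAlgebra.single (⟨((0 : Fin n → ℤ), (1 : ℤ)), h01⟩ : P) 1)
    (j : AddMonoidAlgebra ℂ P →ₐ[ℂ] AddMonoidAlgebra ℂ ((Fin n → ℤ) × ℤ))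
    (hj : ∀ p : P, j (AddMonoidAlgebra.single p 1) =
        AddMonoidAlgebra.single (p : (Fin n → ℤ) × ℤ) 1) :
    @IsLocalization.Away (AddMonoidAlgebra ℂ P) _ t
      (AddMonoidAlgebra ℂ ((Fin n → ℤ) × ℤ)) _ j.toRingHom.toAlgebra := by
  letI := j.toRingHom.toAlgebra
  have halg : algebraMap (AddMonoidAlgebra ℂ P) (AddMonoidAlgebra ℂ ((Fin n → ℤ) × ℤ)) =
      j.toRingHom := rfl
  -- j on a general single
  have hjs : ∀ (p : P) (c : ℂ), j (AddMonoidAlgebra.single p c) =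
      AddMonoidAlgebra.single (p : (Fin n → ℤ) × ℤ) c := by
    intro p c
    have h1 : (AddMonoidAlgebra.single p c : AddMonoidAlgebra ℂ P)
        = c • AddMonoidAlgebra.single p 1 := by
      rw [AddMonoidAlgebra.smul_single, smul_eq_mul, mul_one]
    rw [h1, map_smul, hj, AddMonoidAlgebra.smul_single, smul_eq_mul, mul_one]
  -- j is mapDomain
  have hjd : ∀ x : AddMonoidAlgebra ℂ P,
      j x = AddMonoidAlgebra.mapDomain (Subtype.val : P → (Fin n → ℤ) × ℤ) x := by
    intro x
    induction x using AddMonoidAlgebra.induction_linear with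
    | zero => simp
    | add a b ha hb => rw [map_add, AddMonoidAlgebra.mapDomain_add, ha, hb]
    | single p c => rw [hjs, AddMonoidAlgebra.mapDomain_single]
  have hinj : Function.Injective j := by
    intro a b hab
    have := (hjd a).symm.trans (hab.trans (hjd b))
    exact AddMonoidAlgebra.mapDomain_injective Subtype.val_injective this
  -- j (t ^ m)
  have hjt : ∀ m : ℕ, j (t ^ m) =
      AddMonoidAlgebra.single (((0 : Fin n → ℤ), (m : ℤ))) 1 := by
    intro m
    rw [map_pow, ht, hj, AddMonoidAlgebra.single_pow, one_pow]
    congr 1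
    simp
  -- single (0,m) is a unit
  have hunit : ∀ m : ℕ, IsUnit
      (AddMonoidAlgebra.single (((0 : Fin n → ℤ), (m : ℤ))) (1 : ℂ)) := by
    intro m
    refine IsUnit.of_mul_eq_one
      (AddMonoidAlgebra.single (((0 : Fin n → ℤ), (-m : ℤ))) 1) ?_
    rw [AddMonoidAlgebra.single_mul_single, mul_one]
    have : (((0 : Fin n → ℤ), (m : ℤ))) + (((0 : Fin n → ℤ), (-m : ℤ))) = 0 := by
      simp [Prod.ext_iff]
    rw [this, AddMonoidAlgebra.one_def]
  refine ⟨⟨?_, ?_, ?_⟩⟩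
  · rintro ⟨y, m, rfl⟩
    rw [halg]
    show IsUnit (j (t ^ m))
    rw [hjt]
    exact hunit m
  · -- surjectivity
    intro z
    set k : ℕ := z.coeff.support.sup (fun g => (⌈φ g.1⌉ - g.2).toNat) with hk
    have hmem : ∀ g ∈ z.coeff.support, ((g.1 : Fin n → ℤ), g.2 + (k : ℤ)) ∈ P := by
      intro g hg
      rw [hP]
      have h1 : ⌈φ g.1⌉ - g.2 ≤ (k : ℤ) :=
        le_trans (Int.self_le_toNat _) (by exact_mod_cast Finset.le_sup (f := fun g => (⌈φ g.1⌉ - g.2).toNat) hg)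
      have h2 : φ g.1 ≤ (⌈φ g.1⌉ : ℚ) := Int.le_ceil _
      have h3 : ((⌈φ g.1⌉ : ℤ) : ℚ) ≤ ((g.2 + (k : ℤ) : ℤ) : ℚ) := by
        exact_mod_cast by linarith
      exact le_trans h2 h3
    refine ⟨⟨∑ g ∈ z.coeff.support.attach, AddMonoidAlgebra.single
        (⟨(g.1.1, g.1.2 + (k : ℤ)), hmem g.1 g.2⟩ : P) (z.coeff g.1), ⟨t ^ k, k, rfl⟩⟩, ?_⟩
    rw [halg]
    show z * j (t ^ k) = j _
    rw [hjt, map_sum]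
    calc z * AddMonoidAlgebra.single (((0 : Fin n → ℤ), (k : ℤ))) 1
        = (∑ g ∈ z.coeff.support, AddMonoidAlgebra.single g (z.coeff g)) *
            AddMonoidAlgebra.single (((0 : Fin n → ℤ), (k : ℤ))) 1 := by
          conv_lhs => rw [← AddMonoidAlgebra.sum_coeff_single z]
          rw [Finsupp.sum]
      _ = ∑ g ∈ z.coeff.support, AddMonoidAlgebra.single ((g.1, g.2 + (k : ℤ))) (z.coeff g) := by
          rw [Finset.sum_mul]
          refine Finset.sum_congr rfl fun g _ => ?_
          rw [AddMonoidAlgebra.single_mul_single, mul_one]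
          congr 1
          simp [Prod.ext_iff]
      _ = ∑ g ∈ z.coeff.support.attach,
            AddMonoidAlgebra.single ((g.1.1, g.1.2 + (k : ℤ))) (z.coeff g.1) := by
          rw [← Finset.sum_attach]
      _ = _ := by
          refine Finset.sum_congr rfl fun g _ => ?_
          rw [hjs]
  · -- exists_of_eq
    intro a b hab
    rw [halg] at hab
    exact ⟨1, by rw [hinj hab]⟩
end

section
/- Let S = {(m₁,m₂,h) ∈ ℤ³ : h ≥ max(m₁,0) + max(m₂,0)}, an additive submonoid of ℤ³. Then the ℂ-algebra homomorphism ℂ[Z₁,Z₂,Z₃,Z₄] → AddMonoidAlgebra ℂ S determined by Z₁ ↦ z^{(1,0,1)}, Z₂ ↦ z^{(0,1,1)}, Z₃ ↦ z^{(−1,0,0)}, Z₄ ↦ z^{(0,−1,0)} is surjective with kernel the principal ideal generated by Z₁·Z₃ − Z₂·Z₄; hence it induces a ℂ-algebra isomorphism ℂ[Z₁,Z₂,Z₃,Z₄]/(Z₁Z₃ − Z₂Z₄) ≅ AddMonoidAlgebra ℂ S. -/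
open MvPolynomial

set_option maxHeartbeats 1000000 in
/-- For `S = {(m₁,m₂,h) ∈ ℤ³ : h ≥ max(m₁,0) + max(m₂,0)}`, the ℂ-algebra map
`ℂ[Z₁,Z₂,Z₃,Z₄] → ℂ[S]` with `Z₁ ↦ z^{(1,0,1)}`, `Z₂ ↦ z^{(0,1,1)}`, `Z₃ ↦ z^{(-1,0,0)}`,
`Z₄ ↦ z^{(0,-1,0)}` is surjective with kernel `(Z₁Z₃ - Z₂Z₄)`; hence
`ℂ[Z₁,Z₂,Z₃,Z₄]/(Z₁Z₃ - Z₂Z₄) ≅ ℂ[S]`. -/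
theorem stmt_11
    (S : AddSubmonoid (ℤ × ℤ × ℤ))
    (hS : ∀ p : ℤ × ℤ × ℤ, p ∈ S ↔ max p.1 0 + max p.2.1 0 ≤ p.2.2)
    (h₁ : ((1, 0, 1) : ℤ × ℤ × ℤ) ∈ S) (h₂ : ((0, 1, 1) : ℤ × ℤ × ℤ) ∈ S)
    (h₃ : ((-1, 0, 0) : ℤ × ℤ × ℤ) ∈ S) (h₄ : ((0, -1, 0) : ℤ × ℤ × ℤ) ∈ S)
    (ψ : MvPolynomial (Fin 4) ℂ →ₐ[ℂ] AddMonoidAlgebra ℂ S)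
    (hψ₁ : ψ (X 0) = AddMonoidAlgebra.single (⟨(1, 0, 1), h₁⟩ : S) 1)
    (hψ₂ : ψ (X 1) = AddMonoidAlgebra.single (⟨(0, 1, 1), h₂⟩ : S) 1)
    (hψ₃ : ψ (X 2) = AddMonoidAlgebra.single (⟨(-1, 0, 0), h₃⟩ : S) 1)
    (hψ₄ : ψ (X 3) = AddMonoidAlgebra.single (⟨(0, -1, 0), h₄⟩ : S) 1) :
    Function.Surjective ψ ∧
      RingHom.ker ψ = Ideal.span {(X 0 * X 2 - X 1 * X 3 : MvPolynomial (Fin 4) ℂ)} ∧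
      Nonempty ((MvPolynomial (Fin 4) ℂ ⧸
          Ideal.span {(X 0 * X 2 - X 1 * X 3 : MvPolynomial (Fin 4) ℂ)}) ≃ₐ[ℂ]
        AddMonoidAlgebra ℂ S) := by
  set I : Ideal (MvPolynomial (Fin 4) ℂ) :=
    Ideal.span {(X 0 * X 2 - X 1 * X 3 : MvPolynomial (Fin 4) ℂ)} with hI
  let Q : MvPolynomial (Fin 4) ℂ →ₐ[ℂ] (MvPolynomial (Fin 4) ℂ ⧸ I) := Ideal.Quotient.mkₐ ℂ I
  -- the basic relation in the quotient
  have hrel : Q (X 0) * Q (X 2) = Q (X 1) * Q (X 3) := by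
    have h0 : Q (X 0 * X 2 - X 1 * X 3) = 0 := by
      show Ideal.Quotient.mk I _ = 0
      rw [Ideal.Quotient.eq_zero_iff_mem]
      exact Ideal.subset_span rfl
    rw [map_sub, map_mul, map_mul, sub_eq_zero] at h0
    exact h0
  -- key lemma: monomials of same "degree" are equal in the quotient
  have L2 : ∀ a b c d a' b' c' d' : ℕ, (a:ℤ) - c = (a':ℤ) - c' → (b:ℤ) - d = (b':ℤ) - d' →
      (a:ℤ) + b = (a':ℤ) + b' →
      Q (X 0 ^ a * X 1 ^ b * X 2 ^ c * X 3 ^ d) = Q (X 0 ^ a' * X 1 ^ b' * X 2 ^ c' * X 3 ^ d') := by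
    have main : ∀ a b c d a' b' c' d' : ℕ, a' ≤ a → (a:ℤ) - c = (a':ℤ) - c' →
        (b:ℤ) - d = (b':ℤ) - d' → (a:ℤ) + b = (a':ℤ) + b' →
        Q (X 0 ^ a * X 1 ^ b * X 2 ^ c * X 3 ^ d) = Q (X 0 ^ a' * X 1 ^ b' * X 2 ^ c' * X 3 ^ d') := by
      intro a b c d a' b' c' d' hle e1 e2 e3
      obtain ⟨k, rfl⟩ : ∃ k, a = a' + k := ⟨a - a', by omega⟩
      obtain ⟨rfl, rfl, rfl⟩ : c = c' + k ∧ b' = b + k ∧ d' = d + k := by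
        refine ⟨by omega, by omega, by omega⟩
      simp only [map_mul, map_pow]
      have key : (Q (X 0) * Q (X 2)) ^ k = (Q (X 1) * Q (X 3)) ^ k := by rw [hrel]
      calc Q (X 0) ^ (a' + k) * Q (X 1) ^ b * Q (X 2) ^ (c' + k) * Q (X 3) ^ d
          = (Q (X 0) ^ a' * Q (X 1) ^ b * Q (X 2) ^ c' * Q (X 3) ^ d) *
            (Q (X 0) * Q (X 2)) ^ k := by ring
        _ = (Q (X 0) ^ a' * Q (X 1) ^ b * Q (X 2) ^ c' * Q (X 3) ^ d) *
            (Q (X 1) * Q (X 3)) ^ k := by rw [key]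
        _ = Q (X 0) ^ a' * Q (X 1) ^ (b + k) * Q (X 2) ^ c' * Q (X 3) ^ (d + k) := by ring
    intro a b c d a' b' c' d' e1 e2 e3
    rcases le_total a' a with h | h
    · exact main a b c d a' b' c' d' h e1 e2 e3
    · exact (main a' b' c' d' a b c d h e1.symm e2.symm e3.symm).symm
  -- exponent functions and normal-form monomial
  let ea : ℤ × ℤ × ℤ → ℕ := fun p => p.1.toNat
  let eb : ℤ × ℤ × ℤ → ℕ := fun p => (p.2.2 - max p.1 0).toNat
  let ec : ℤ × ℤ × ℤ → ℕ := fun p => (-p.1).toNat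
  let ed : ℤ × ℤ × ℤ → ℕ := fun p => (p.2.2 - max p.1 0 - p.2.1).toNat
  let mon : ℤ × ℤ × ℤ → MvPolynomial (Fin 4) ℂ := fun p =>
    X 0 ^ ea p * X 1 ^ eb p * X 2 ^ ec p * X 3 ^ ed p
  -- degree identities for members of S
  have hdeg : ∀ p : ℤ × ℤ × ℤ, p ∈ S →
      ((ea p : ℤ) - ec p = p.1 ∧ (eb p : ℤ) - ed p = p.2.1 ∧ (ea p : ℤ) + eb p = p.2.2) := by
    intro p hp
    have := (hS p).mp hp
    refine ⟨?_, ?_, ?_⟩ <;> simp only [ea, eb, ec, ed] <;> omega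
  -- computation of ψ on monomials
  have hψmon : ∀ (a b c d : ℕ) (s : S),
      (a:ℤ) - c = (s:ℤ×ℤ×ℤ).1 → (b:ℤ) - d = (s:ℤ×ℤ×ℤ).2.1 → (a:ℤ) + b = (s:ℤ×ℤ×ℤ).2.2 →
      ψ (X 0 ^ a * X 1 ^ b * X 2 ^ c * X 3 ^ d) = AddMonoidAlgebra.single s 1 := by
    intro a b c d s e1 e2 e3
    simp only [map_mul, map_pow, hψ₁, hψ₂, hψ₃, hψ₄, AddMonoidAlgebra.single_pow,
      AddMonoidAlgebra.single_mul_single, one_pow, one_mul]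
    congr 1
    apply Subtype.ext
    show ((a • (⟨(1,0,1), h₁⟩ : S) + b • ⟨(0,1,1), h₂⟩ + c • ⟨(-1,0,0), h₃⟩ +
      d • ⟨(0,-1,0), h₄⟩ : S) : ℤ×ℤ×ℤ) = (s : ℤ×ℤ×ℤ)
    push_cast
    refine Prod.ext ?_ (Prod.ext ?_ ?_) <;> simp [Prod.fst_add, Prod.snd_add] <;> omega
  have hψmonS : ∀ s : S, ψ (mon (s : ℤ×ℤ×ℤ)) = AddMonoidAlgebra.single s 1 := by
    intro s
    obtain ⟨d1, d2, d3⟩ := hdeg (s : ℤ×ℤ×ℤ) s.2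
    exact hψmon _ _ _ _ s d1 d2 d3
  -- surjectivity
  have hsurj : Function.Surjective ψ := by
    intro x
    induction x using AddMonoidAlgebra.induction_linear with
    | zero => exact ⟨0, map_zero ψ⟩
    | add f g hf hg =>
      obtain ⟨p, hp⟩ := hf; obtain ⟨q, hq⟩ := hg
      exact ⟨p + q, by rw [map_add, hp, hq]⟩
    | single s c =>
      refine ⟨c • mon (s : ℤ×ℤ×ℤ), ?_⟩
      rw [map_smul, hψmonS]
      exact AddMonoidAlgebra.smul_single' c s 1 ▸ by simp [AddMonoidAlgebra.smul_single]
  -- the monoid hom from Multiplicative S to the quotient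
  let F : Multiplicative S →* (MvPolynomial (Fin 4) ℂ ⧸ I) :=
    { toFun := fun s => Q (mon ((Multiplicative.toAdd s : S) : ℤ×ℤ×ℤ))
      map_one' := by
        show Q (mon ((0 : S) : ℤ×ℤ×ℤ)) = 1
        have : mon ((0 : S) : ℤ×ℤ×ℤ) = 1 := by
          simp [mon, ea, eb, ec, ed]
        rw [this, map_one]
      map_mul' := by
        intro s t
        show Q (mon ((Multiplicative.toAdd s + Multiplicative.toAdd t : S) : ℤ×ℤ×ℤ)) =
          Q (mon ((Multiplicative.toAdd s : S) : ℤ×ℤ×ℤ)) *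
          Q (mon ((Multiplicative.toAdd t : S) : ℤ×ℤ×ℤ))
        set p := ((Multiplicative.toAdd s : S) : ℤ×ℤ×ℤ) with hp
        set q := ((Multiplicative.toAdd t : S) : ℤ×ℤ×ℤ) with hq
        have hps : p ∈ S := (Multiplicative.toAdd s).2
        have hqs : q ∈ S := (Multiplicative.toAdd t).2
        have hpq : ((Multiplicative.toAdd s + Multiplicative.toAdd t : S) : ℤ×ℤ×ℤ) = p + q := rfl
        rw [hpq, ← map_mul]
        have hmm : mon p * mon q =
            X 0 ^ (ea p + ea q) * X 1 ^ (eb p + eb q) * X 2 ^ (ec p + ec q) *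
              X 3 ^ (ed p + ed q) := by
          simp only [mon, pow_add]; ring
        rw [hmm]
        obtain ⟨a1, a2, a3⟩ := hdeg p hps
        obtain ⟨b1, b2, b3⟩ := hdeg q hqs
        obtain ⟨c1, c2, c3⟩ := hdeg (p + q) (S.add_mem hps hqs)
        have hmon2 : mon (p + q) =
            X 0 ^ ea (p+q) * X 1 ^ eb (p+q) * X 2 ^ ec (p+q) * X 3 ^ ed (p+q) := rfl
        rw [hmon2]
        apply L2 <;> push_cast <;>
          simp only [Prod.fst_add, Prod.snd_add] at c1 c2 c3 <;> omega }
  let φ : AddMonoidAlgebra ℂ S →ₐ[ℂ] (MvPolynomial (Fin 4) ℂ ⧸ I) :=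
    AddMonoidAlgebra.lift ℂ _ S F
  have hφsingle : ∀ s : S, φ (AddMonoidAlgebra.single s 1) = Q (mon (s : ℤ×ℤ×ℤ)) := by
    intro s
    rw [AddMonoidAlgebra.lift_single, one_smul]
    rfl
  -- lifted map
  have hle : I ≤ RingHom.ker ψ := by
    rw [hI, Ideal.span_le, Set.singleton_subset_iff]
    show ψ (X 0 * X 2 - X 1 * X 3) = 0
    rw [map_sub, map_mul, map_mul, hψ₁, hψ₂, hψ₃, hψ₄,
      AddMonoidAlgebra.single_mul_single, AddMonoidAlgebra.single_mul_single, sub_eq_zero]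
    congr 1
  let ψb : (MvPolynomial (Fin 4) ℂ ⧸ I) →ₐ[ℂ] AddMonoidAlgebra ℂ S :=
    Ideal.Quotient.liftₐ I ψ (fun a ha => hle ha)
  have hψbQ : ∀ p, ψb (Q p) = ψ p := fun p => rfl
  -- ψb ∘ φ = id
  have hc1 : ∀ x, ψb (φ x) = x := by
    have : ψb.comp φ = AlgHom.id ℂ (AddMonoidAlgebra ℂ S) := by
      apply AddMonoidAlgebra.algHom_ext
      intro s
      simp only [AlgHom.coe_comp, Function.comp_apply, AlgHom.id_apply]
      rw [hφsingle, hψbQ, hψmonS]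
      exact Subsingleton.elim _ _
    intro x
    exact congrFun (congrArg (fun f => f.toFun) this) x
  -- φ ∘ ψb = id
  have hc2 : ∀ x, φ (ψb x) = x := by
    have hQsurj : Function.Surjective Q := Ideal.Quotient.mkₐ_surjective ℂ I
    have : (φ.comp ψb).comp Q = Q := by
      apply MvPolynomial.algHom_ext
      intro i
      simp only [AlgHom.coe_comp, Function.comp_apply]
      rw [hψbQ]
      fin_cases i
      · show φ (ψ (X 0)) = Q (X 0)
        rw [hψ₁, hφsingle]
        congr 1
        show X 0 ^ (1:ℤ).toNat * X 1 ^ ((1:ℤ) - max 1 0).toNat * X 2 ^ (-(1:ℤ)).toNat *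
          X 3 ^ ((1:ℤ) - max 1 0 - 0).toNat = X 0
        norm_num [show ((-1:ℤ)).toNat = 0 from rfl, show ((1:ℤ)).toNat = 1 from rfl,
          show ((0:ℤ)).toNat = 0 from rfl]
      · show φ (ψ (X 1)) = Q (X 1)
        rw [hψ₂, hφsingle]
        congr 1
        show X 0 ^ (0:ℤ).toNat * X 1 ^ ((1:ℤ) - max 0 0).toNat * X 2 ^ (-(0:ℤ)).toNat *
          X 3 ^ ((1:ℤ) - max 0 0 - 1).toNat = X 1
        norm_num [show ((-1:ℤ)).toNat = 0 from rfl, show ((1:ℤ)).toNat = 1 from rfl,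
          show ((0:ℤ)).toNat = 0 from rfl]
      · show φ (ψ (X 2)) = Q (X 2)
        rw [hψ₃, hφsingle]
        congr 1
        show X 0 ^ (-1:ℤ).toNat * X 1 ^ ((0:ℤ) - max (-1) 0).toNat * X 2 ^ (-(-1:ℤ)).toNat *
          X 3 ^ ((0:ℤ) - max (-1) 0 - 0).toNat = X 2
        norm_num [show ((-1:ℤ)).toNat = 0 from rfl, show ((1:ℤ)).toNat = 1 from rfl,
          show ((0:ℤ)).toNat = 0 from rfl]
      · show φ (ψ (X 3)) = Q (X 3)
        rw [hψ₄, hφsingle]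
        congr 1
        show X 0 ^ (0:ℤ).toNat * X 1 ^ ((0:ℤ) - max 0 0).toNat * X 2 ^ (-(0:ℤ)).toNat *
          X 3 ^ ((0:ℤ) - max 0 0 - (-1)).toNat = X 3
        norm_num [show ((-1:ℤ)).toNat = 0 from rfl, show ((1:ℤ)).toNat = 1 from rfl,
          show ((0:ℤ)).toNat = 0 from rfl]
    intro x
    obtain ⟨p, rfl⟩ := hQsurj x
    exact congrFun (congrArg (fun f => f.toFun) this) p
  have hinj : Function.Injective ψb := Function.LeftInverse.injective hc2
  refine ⟨hsurj, ?_, ?_⟩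
  · refine le_antisymm ?_ hle
    intro p hp
    have h0 : ψb (Q p) = 0 := by rw [hψbQ]; exact RingHom.mem_ker.mp hp
    have h1 : Q p = 0 := hinj (by rw [h0, map_zero])
    exact Ideal.Quotient.eq_zero_iff_mem.mp h1
  · refine ⟨AlgEquiv.ofBijective ψb ⟨hinj, ?_⟩⟩
    intro y
    obtain ⟨p, hp⟩ := hsurj y
    exact ⟨Q p, by rw [hψbQ, hp]⟩
end

section
/- Let Q = {(m₁,m₂,h,d) ∈ ℤ⁴ : |m₁| + |m₂| ≤ d and h ≥ max(m₁,0) + max(m₂,0)}, an additive submonoid of ℤ⁴. Then the ℂ-algebra homomorphism ℂ[X,Y,Z,W,U,T] → AddMonoidAlgebra ℂ Q determined by X ↦ z^{(1,0,1,1)}, Y ↦ z^{(−1,0,0,1)}, Z ↦ z^{(0,1,1,1)}, W ↦ z^{(0,−1,0,1)}, U ↦ z^{(0,0,0,1)}, T ↦ z^{(0,0,1,0)} is surjective with kernel the ideal generated by X·Y − T·U² and Z·W − T·U²; hence it induces a ℂ-algebra isomorphism ℂ[X,Y,Z,W,U,T]/(XY − TU², ZW − TU²) ≅ AddMonoidAlgebra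 ℂ Q. -/
open MvPolynomial

namespace Stmt14Aux

variable {Q : AddSubmonoid (ℤ × ℤ × ℤ × ℤ)}

/-- The six generators of the monoid `Q`. -/
def gens (Q : AddSubmonoid (ℤ × ℤ × ℤ × ℤ))
    (h₁ : ((1, 0, 1, 1) : ℤ × ℤ × ℤ × ℤ) ∈ Q) (h₂ : ((-1, 0, 0, 1) : ℤ × ℤ × ℤ × ℤ) ∈ Q)
    (h₃ : ((0, 1, 1, 1) : ℤ × ℤ × ℤ × ℤ) ∈ Q) (h₄ : ((0, -1, 0, 1) : ℤ × ℤ × ℤ × ℤ) ∈ Q)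
    (h₅ : ((0, 0, 0, 1) : ℤ × ℤ × ℤ × ℤ) ∈ Q) (h₆ : ((0, 0, 1, 0) : ℤ × ℤ × ℤ × ℤ) ∈ Q) :
    Fin 6 → Q :=
  ![⟨_, h₁⟩, ⟨_, h₂⟩, ⟨_, h₃⟩, ⟨_, h₄⟩, ⟨_, h₅⟩, ⟨_, h₆⟩]

/-- The exponent-vector-to-monoid map. -/
def pii (v : Fin 6 → Q) (a : Fin 6 →₀ ℕ) : Q := ∑ i, a i • v i

lemma pii_add (v : Fin 6 → Q) (x y : Fin 6 →₀ ℕ) :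
    pii v (x + y) = pii v x + pii v y := by
  simp [pii, Finsupp.add_apply, add_smul, Finset.sum_add_distrib]

lemma pii_single (v : Fin 6 → Q) (i : Fin 6) (n : ℕ) :
    pii v (Finsupp.single i n) = n • v i := by
  simp [pii, Finsupp.single_apply]

/-- The normal form of an element of `Q` as an exponent vector. -/
noncomputable def nf (Q : AddSubmonoid (ℤ × ℤ × ℤ × ℤ)) (q : Q) : Fin 6 →₀ ℕ :=
  Finsupp.equivFunOnFinite.symm
    ![q.1.1.toNat, (-q.1.1).toNat, q.1.2.1.toNat, (-q.1.2.1).toNat,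
      (q.1.2.2.2 - q.1.1.natAbs - q.1.2.1.natAbs).toNat,
      (q.1.2.2.1 - q.1.1.toNat - q.1.2.1.toNat).toNat]

lemma nf0 (q : Q) : nf Q q 0 = q.1.1.toNat := rfl
lemma nf1 (q : Q) : nf Q q 1 = (-q.1.1).toNat := rfl
lemma nf2 (q : Q) : nf Q q 2 = q.1.2.1.toNat := rfl
lemma nf3 (q : Q) : nf Q q 3 = (-q.1.2.1).toNat := rfl
lemma nf4 (q : Q) : nf Q q 4 = (q.1.2.2.2 - q.1.1.natAbs - q.1.2.1.natAbs).toNat := rfl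
lemma nf5 (q : Q) : nf Q q 5 = (q.1.2.2.1 - q.1.1.toNat - q.1.2.1.toNat).toNat := rfl

variable (h₁ : ((1, 0, 1, 1) : ℤ × ℤ × ℤ × ℤ) ∈ Q) (h₂ : ((-1, 0, 0, 1) : ℤ × ℤ × ℤ × ℤ) ∈ Q)
    (h₃ : ((0, 1, 1, 1) : ℤ × ℤ × ℤ × ℤ) ∈ Q) (h₄ : ((0, -1, 0, 1) : ℤ × ℤ × ℤ × ℤ) ∈ Q)
    (h₅ : ((0, 0, 0, 1) : ℤ × ℤ × ℤ × ℤ) ∈ Q) (h₆ : ((0, 0, 1, 0) : ℤ × ℤ × ℤ × ℤ) ∈ Q)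

lemma pii_coords (a : Fin 6 →₀ ℕ) :
    ((pii (gens Q h₁ h₂ h₃ h₄ h₅ h₆) a : Q) : ℤ × ℤ × ℤ × ℤ) =
      ((a 0 : ℤ) - a 1, (a 2 : ℤ) - a 3, (a 0 : ℤ) + a 2 + a 5,
        (a 0 : ℤ) + a 1 + a 2 + a 3 + a 4) := by
  have e0 : gens Q h₁ h₂ h₃ h₄ h₅ h₆ 0 = ⟨(1, 0, 1, 1), h₁⟩ := rfl
  have e1 : gens Q h₁ h₂ h₃ h₄ h₅ h₆ 1 = ⟨(-1, 0, 0, 1), h₂⟩ := rfl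
  have e2 : gens Q h₁ h₂ h₃ h₄ h₅ h₆ 2 = ⟨(0, 1, 1, 1), h₃⟩ := rfl
  have e3 : gens Q h₁ h₂ h₃ h₄ h₅ h₆ 3 = ⟨(0, -1, 0, 1), h₄⟩ := rfl
  have e4 : gens Q h₁ h₂ h₃ h₄ h₅ h₆ 4 = ⟨(0, 0, 0, 1), h₅⟩ := rfl
  have e5 : gens Q h₁ h₂ h₃ h₄ h₅ h₆ 5 = ⟨(0, 0, 1, 0), h₆⟩ := rfl
  simp only [pii, Fin.sum_univ_six, e0, e1, e2, e3, e4, e5]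
  push_cast
  simp only [Prod.ext_iff, Prod.fst_add, Prod.snd_add, Prod.smul_def, smul_eq_mul, Prod.fst_mul,
    Prod.snd_mul]
  refine ⟨by ring, by ring, by ring, by ring⟩

lemma pii_nf
    (hQ : ∀ p : ℤ × ℤ × ℤ × ℤ, p ∈ Q ↔
      |p.1| + |p.2.1| ≤ p.2.2.2 ∧ max p.1 0 + max p.2.1 0 ≤ p.2.2.1)
    (q : Q) : pii (gens Q h₁ h₂ h₃ h₄ h₅ h₆) (nf Q q) = q := by
  have hq := (hQ q.1).mp q.2
  simp only [Int.abs_eq_natAbs] at hq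
  apply Subtype.ext
  rw [pii_coords, nf0, nf1, nf2, nf3, nf4, nf5]
  obtain ⟨⟨m₁, m₂, h, d⟩, hmem⟩ := q
  simp only [Prod.ext_iff] at hq ⊢
  refine ⟨by omega, by omega, by omega, by omega⟩

/-- On "reduced" exponent vectors, `nf ∘ pii` is the identity. -/
lemma nf_pii_of_reduced (a : Fin 6 →₀ ℕ) (ha : (a 0 = 0 ∨ a 1 = 0) ∧ (a 2 = 0 ∨ a 3 = 0)) :
    nf Q (pii (gens Q h₁ h₂ h₃ h₄ h₅ h₆) a) = a := by
  set q := pii (gens Q h₁ h₂ h₃ h₄ h₅ h₆) a with hq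
  have hc : ((q : Q) : ℤ × ℤ × ℤ × ℤ) =
      ((a 0 : ℤ) - a 1, (a 2 : ℤ) - a 3, (a 0 : ℤ) + a 2 + a 5,
        (a 0 : ℤ) + a 1 + a 2 + a 3 + a 4) := pii_coords h₁ h₂ h₃ h₄ h₅ h₆ a
  have c1 : ((q : Q) : ℤ × ℤ × ℤ × ℤ).1 = (a 0 : ℤ) - a 1 := by rw [hc]
  have c2 : ((q : Q) : ℤ × ℤ × ℤ × ℤ).2.1 = (a 2 : ℤ) - a 3 := by rw [hc]
  have c3 : ((q : Q) : ℤ × ℤ × ℤ × ℤ).2.2.1 = (a 0 : ℤ) + a 2 + a 5 := by rw [hc]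
  have c4 : ((q : Q) : ℤ × ℤ × ℤ × ℤ).2.2.2 = (a 0 : ℤ) + a 1 + a 2 + a 3 + a 4 := by rw [hc]
  ext i
  fin_cases i
  · show nf Q q 0 = a 0
    rw [nf0, c1]; omega
  · show nf Q q 1 = a 1
    rw [nf1, c1]; omega
  · show nf Q q 2 = a 2
    rw [nf2, c2]; omega
  · show nf Q q 3 = a 3
    rw [nf3, c2]; omega
  · show nf Q q 4 = a 4
    rw [nf4, c1, c2, c4]; omega
  · show nf Q q 5 = a 5
    rw [nf5, c1, c2, c3]; omega

lemma reduce
    (n : ℕ) : ∀ a : Fin 6 →₀ ℕ, a 0 + a 1 + a 2 + a 3 ≤ n →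
    (monomial a 1 - monomial (nf Q (pii (gens Q h₁ h₂ h₃ h₄ h₅ h₆) a)) 1 :
        MvPolynomial (Fin 6) ℂ) ∈
      Ideal.span {(X 0 * X 1 - X 5 * X 4 ^ 2 : MvPolynomial (Fin 6) ℂ),
        (X 2 * X 3 - X 5 * X 4 ^ 2 : MvPolynomial (Fin 6) ℂ)} := by
  set v := gens Q h₁ h₂ h₃ h₄ h₅ h₆ with hv
  induction n with
  | zero =>
    intro a ha
    rw [nf_pii_of_reduced h₁ h₂ h₃ h₄ h₅ h₆ a (by omega), sub_self]
    exact zero_mem _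
  | succ n ih =>
    intro a ha
    by_cases h01 : 0 < a 0 ∧ 0 < a 1
    · -- reduce using the first relation
      set c : Fin 6 →₀ ℕ := a - Finsupp.single 0 1 - Finsupp.single 1 1 with hcdef
      have hac : a = c + Finsupp.single 0 1 + Finsupp.single 1 1 := by
        ext i
        fin_cases i <;>
          simp only [hcdef, Finsupp.add_apply, Finsupp.tsub_apply, Finsupp.single_apply] <;>
          simp <;> omega
      set b : Fin 6 →₀ ℕ := c + (Finsupp.single 5 1 + Finsupp.single 4 2) with hbdef
      have hpib : pii v b = pii v a := by
        rw [hbdef, hac]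
        simp only [pii_add, pii_single, one_smul, add_assoc]
        congr 1
      have hmon : (monomial a 1 - monomial b 1 : MvPolynomial (Fin 6) ℂ)
          = monomial c 1 * (X 0 * X 1 - X 5 * X 4 ^ 2) := by
        rw [hac, hbdef]
        simp [mul_sub, X, monomial_mul, monomial_pow, Finsupp.smul_single, add_assoc]
      have hble : b 0 + b 1 + b 2 + b 3 ≤ n := by
        have h0 : b 0 = a 0 - 1 := by
          rw [hbdef, hcdef]
          simp [Finsupp.add_apply, Finsupp.tsub_apply, Finsupp.single_apply]
        have hb1 : b 1 = a 1 - 1 := by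
          rw [hbdef, hcdef]
          simp [Finsupp.add_apply, Finsupp.tsub_apply, Finsupp.single_apply]
        have hb2 : b 2 = a 2 := by
          rw [hbdef, hcdef]
          simp [Finsupp.add_apply, Finsupp.tsub_apply, Finsupp.single_apply]
        have hb3 : b 3 = a 3 := by
          rw [hbdef, hcdef]
          simp [Finsupp.add_apply, Finsupp.tsub_apply, Finsupp.single_apply]
        omega
      have key := ih b hble
      rw [hpib] at key
      have : (monomial a 1 - monomial (nf Q (pii v a)) 1 : MvPolynomial (Fin 6) ℂ)
          = (monomial a 1 - monomial b 1) + (monomial b 1 - monomial (nf Q (pii v a)) 1) := by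
        ring
      rw [this, hmon]
      exact add_mem (Ideal.mul_mem_left _ _ (Ideal.subset_span (by simp))) key
    · by_cases h23 : 0 < a 2 ∧ 0 < a 3
      · -- reduce using the second relation
        set c : Fin 6 →₀ ℕ := a - Finsupp.single 2 1 - Finsupp.single 3 1 with hcdef
        have hac : a = c + Finsupp.single 2 1 + Finsupp.single 3 1 := by
          ext i
          fin_cases i <;>
            simp only [hcdef, Finsupp.add_apply, Finsupp.tsub_apply, Finsupp.single_apply] <;>
            simp <;> omega
        set b : Fin 6 →₀ ℕ := c + (Finsupp.single 5 1 + Finsupp.single 4 2) with hbdef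
        have hpib : pii v b = pii v a := by
          rw [hbdef, hac]
          simp only [pii_add, pii_single, one_smul, add_assoc]
          congr 1
        have hmon : (monomial a 1 - monomial b 1 : MvPolynomial (Fin 6) ℂ)
            = monomial c 1 * (X 2 * X 3 - X 5 * X 4 ^ 2) := by
          rw [hac, hbdef]
          simp [mul_sub, X, monomial_mul, monomial_pow, Finsupp.smul_single, add_assoc]
        have hble : b 0 + b 1 + b 2 + b 3 ≤ n := by
          have h0 : b 0 = a 0 := by
            rw [hbdef, hcdef]
            simp [Finsupp.add_apply, Finsupp.tsub_apply, Finsupp.single_apply]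
          have hb1 : b 1 = a 1 := by
            rw [hbdef, hcdef]
            simp [Finsupp.add_apply, Finsupp.tsub_apply, Finsupp.single_apply]
          have hb2 : b 2 = a 2 - 1 := by
            rw [hbdef, hcdef]
            simp [Finsupp.add_apply, Finsupp.tsub_apply, Finsupp.single_apply]
          have hb3 : b 3 = a 3 - 1 := by
            rw [hbdef, hcdef]
            simp [Finsupp.add_apply, Finsupp.tsub_apply, Finsupp.single_apply]
          omega
        have key := ih b hble
        rw [hpib] at key
        have : (monomial a 1 - monomial (nf Q (pii v a)) 1 : MvPolynomial (Fin 6) ℂ)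
            = (monomial a 1 - monomial b 1) + (monomial b 1 - monomial (nf Q (pii v a)) 1) := by
          ring
        rw [this, hmon]
        exact add_mem (Ideal.mul_mem_left _ _ (Ideal.subset_span (by simp))) key
      · rw [nf_pii_of_reduced h₁ h₂ h₃ h₄ h₅ h₆ a (by omega), sub_self]
        exact zero_mem _

end Stmt14Aux

theorem stmt_14
    (Q : AddSubmonoid (ℤ × ℤ × ℤ × ℤ))
    (hQ : ∀ p : ℤ × ℤ × ℤ × ℤ, p ∈ Q ↔
      |p.1| + |p.2.1| ≤ p.2.2.2 ∧ max p.1 0 + max p.2.1 0 ≤ p.2.2.1)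
    (h₁ : ((1, 0, 1, 1) : ℤ × ℤ × ℤ × ℤ) ∈ Q) (h₂ : ((-1, 0, 0, 1) : ℤ × ℤ × ℤ × ℤ) ∈ Q)
    (h₃ : ((0, 1, 1, 1) : ℤ × ℤ × ℤ × ℤ) ∈ Q) (h₄ : ((0, -1, 0, 1) : ℤ × ℤ × ℤ × ℤ) ∈ Q)
    (h₅ : ((0, 0, 0, 1) : ℤ × ℤ × ℤ × ℤ) ∈ Q) (h₆ : ((0, 0, 1, 0) : ℤ × ℤ × ℤ × ℤ) ∈ Q)
    (ψ : MvPolynomial (Fin 6) ℂ →ₐ[ℂ] AddMonoidAlgebra ℂ Q)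
    (hψ₁ : ψ (X 0) = AddMonoidAlgebra.single (⟨(1, 0, 1, 1), h₁⟩ : Q) 1)
    (hψ₂ : ψ (X 1) = AddMonoidAlgebra.single (⟨(-1, 0, 0, 1), h₂⟩ : Q) 1)
    (hψ₃ : ψ (X 2) = AddMonoidAlgebra.single (⟨(0, 1, 1, 1), h₃⟩ : Q) 1)
    (hψ₄ : ψ (X 3) = AddMonoidAlgebra.single (⟨(0, -1, 0, 1), h₄⟩ : Q) 1)
    (hψ₅ : ψ (X 4) = AddMonoidAlgebra.single (⟨(0, 0, 0, 1), h₅⟩ : Q) 1)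
    (hψ₆ : ψ (X 5) = AddMonoidAlgebra.single (⟨(0, 0, 1, 0), h₆⟩ : Q) 1) :
    Function.Surjective ψ ∧
      RingHom.ker ψ = Ideal.span
        {(X 0 * X 1 - X 5 * X 4 ^ 2 : MvPolynomial (Fin 6) ℂ),
         (X 2 * X 3 - X 5 * X 4 ^ 2 : MvPolynomial (Fin 6) ℂ)} ∧
      Nonempty ((MvPolynomial (Fin 6) ℂ ⧸ Ideal.span
          {(X 0 * X 1 - X 5 * X 4 ^ 2 : MvPolynomial (Fin 6) ℂ),
           (X 2 * X 3 - X 5 * X 4 ^ 2 : MvPolynomial (Fin 6) ℂ)}) ≃ₐ[ℂ]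
        AddMonoidAlgebra ℂ Q) := by
  classical
  set v := Stmt14Aux.gens Q h₁ h₂ h₃ h₄ h₅ h₆ with hv
  have hvX : ∀ i, ψ (X i) = AddMonoidAlgebra.single (v i) 1 := by
    intro i
    fin_cases i
    · exact hψ₁
    · exact hψ₂
    · exact hψ₃
    · exact hψ₄
    · exact hψ₅
    · exact hψ₆
  -- value of ψ on monomials
  have hmono : ∀ (a : Fin 6 →₀ ℕ) (c : ℂ),
      ψ (monomial a c) = AddMonoidAlgebra.single (Stmt14Aux.pii v a) c := by
    intro a c
    rw [monomial_eq, map_mul, Finsupp.prod_pow, map_prod]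
    simp only [map_pow, hvX, AddMonoidAlgebra.single_pow, one_pow]
    rw [Fin.prod_univ_six]
    simp only [AddMonoidAlgebra.single_mul_single, one_mul]
    have hC : ψ (C c) = AddMonoidAlgebra.single (0 : Q) c := by
      rw [MvPolynomial.algHom_C]
      rfl
    rw [hC, AddMonoidAlgebra.single_mul_single, mul_one]
    congr 1
    simp [Stmt14Aux.pii, Fin.sum_univ_six, add_assoc]
  -- ψ as mapDomain
  have hmap : ∀ p : MvPolynomial (Fin 6) ℂ,
      ψ p = AddMonoidAlgebra.mapDomain (fun a => Stmt14Aux.pii v a) p := by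
    intro p
    induction p using AddMonoidAlgebra.induction with
    | zero => simp [AddMonoidAlgebra.mapDomain_zero]
    | single_add a c f _ _ ihf =>
      rw [AddMonoidAlgebra.mapDomain_add, map_add, ihf, AddMonoidAlgebra.mapDomain_single]
      congr 1
      rw [MvPolynomial.single_eq_monomial, hmono]
  -- surjectivity
  have hsurj : Function.Surjective ψ := by
    intro x
    induction x using AddMonoidAlgebra.induction with
    | zero => exact ⟨0, map_zero ψ⟩
    | single_add q c f _ _ ihf =>
      obtain ⟨p, hp⟩ := ihf
      refine ⟨monomial (Stmt14Aux.nf Q q) c + p, ?_⟩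
      rw [map_add, hp, hmono, Stmt14Aux.pii_nf h₁ h₂ h₃ h₄ h₅ h₆ hQ q]
  -- kernel
  have hker : RingHom.ker ψ = Ideal.span
      {(X 0 * X 1 - X 5 * X 4 ^ 2 : MvPolynomial (Fin 6) ℂ),
       (X 2 * X 3 - X 5 * X 4 ^ 2 : MvPolynomial (Fin 6) ℂ)} := by
    apply le_antisymm
    · -- ker ⊆ span
      intro p hp
      have hp0 : ψ p = 0 := hp
      set f : (Fin 6 →₀ ℕ) → Q := fun a => Stmt14Aux.pii v a with hf
      set r : MvPolynomial (Fin 6) ℂ :=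
        AddMonoidAlgebra.mapDomain (fun a => Stmt14Aux.nf Q (f a)) p with hr
      have hr0 : r = 0 := by
        have : AddMonoidAlgebra.mapDomain (Stmt14Aux.nf Q ∘ f) p
            = AddMonoidAlgebra.mapDomain (Stmt14Aux.nf Q) (AddMonoidAlgebra.mapDomain f p) := by
          apply AddMonoidAlgebra.coeff_injective
          simp only [AddMonoidAlgebra.coeff_mapDomain]
          exact Finsupp.mapDomain_comp
        rw [hr]
        show AddMonoidAlgebra.mapDomain (Stmt14Aux.nf Q ∘ f) p = 0
        rw [this, ← hmap p, hp0, AddMonoidAlgebra.mapDomain_zero]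
      have hpr : p - r ∈ Ideal.span
          {(X 0 * X 1 - X 5 * X 4 ^ 2 : MvPolynomial (Fin 6) ℂ),
           (X 2 * X 3 - X 5 * X 4 ^ 2 : MvPolynomial (Fin 6) ℂ)} := by
        have hpsum : p = ∑ a ∈ p.support, monomial a (coeff a p) :=
          (MvPolynomial.support_sum_monomial_coeff p).symm
        have hrsum : r = ∑ a ∈ p.support, monomial (Stmt14Aux.nf Q (f a)) (coeff a p) := by
          rw [hr, AddMonoidAlgebra.mapDomain, Finsupp.mapDomain, AddMonoidAlgebra.ofCoeff_finsuppSum]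
          rw [Finsupp.sum]
          refine Finset.sum_congr rfl fun a _ => ?_
          rw [AddMonoidAlgebra.ofCoeff_single, MvPolynomial.single_eq_monomial]
          rfl
        rw [hpsum, hrsum, ← Finset.sum_sub_distrib]
        refine Ideal.sum_mem _ fun a _ => ?_
        have : (monomial a (coeff a p) - monomial (Stmt14Aux.nf Q (f a)) (coeff a p) :
            MvPolynomial (Fin 6) ℂ)
            = C (coeff a p) * (monomial a 1 - monomial (Stmt14Aux.nf Q (f a)) 1) := by
          rw [mul_sub, C_mul_monomial, C_mul_monomial, mul_one]
        rw [this]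
        exact Ideal.mul_mem_left _ _
          (Stmt14Aux.reduce h₁ h₂ h₃ h₄ h₅ h₆ (a 0 + a 1 + a 2 + a 3) a le_rfl)
      have : p = p - r := by rw [hr0, sub_zero]
      rw [this]
      exact hpr
    · -- span ⊆ ker
      rw [Ideal.span_le]
      rintro g (rfl | rfl)
      · rw [SetLike.mem_coe, RingHom.mem_ker]
        rw [map_sub, map_mul, map_mul, map_pow, hψ₁, hψ₂, hψ₅, hψ₆]
        rw [AddMonoidAlgebra.single_pow, AddMonoidAlgebra.single_mul_single,
          AddMonoidAlgebra.single_mul_single]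
        rw [sub_eq_zero]
        have hq12 : (⟨(1, 0, 1, 1), h₁⟩ : Q) + ⟨(-1, 0, 0, 1), h₂⟩
            = (⟨(0, 0, 1, 0), h₆⟩ : Q) + 2 • ⟨(0, 0, 0, 1), h₅⟩ := by
          apply Subtype.ext
          push_cast
          simp [Prod.ext_iff]
        rw [hq12]
        norm_num
      · rw [SetLike.mem_coe, RingHom.mem_ker]
        rw [map_sub, map_mul, map_mul, map_pow, hψ₃, hψ₄, hψ₅, hψ₆]
        rw [AddMonoidAlgebra.single_pow, AddMonoidAlgebra.single_mul_single,
          AddMonoidAlgebra.single_mul_single]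
        rw [sub_eq_zero]
        have hq34 : (⟨(0, 1, 1, 1), h₃⟩ : Q) + ⟨(0, -1, 0, 1), h₄⟩
            = (⟨(0, 0, 1, 0), h₆⟩ : Q) + 2 • ⟨(0, 0, 0, 1), h₅⟩ := by
          apply Subtype.ext
          push_cast
          simp [Prod.ext_iff]
        rw [hq34]
        norm_num
  refine ⟨hsurj, hker, ⟨(Ideal.quotientEquivAlgOfEq ℂ hker.symm).trans
    (Ideal.quotientKerAlgEquivOfSurjective hsurj)⟩⟩
end

section
/- Let K = ℂ(x,y,z,w) be the field of rational functions in four variables over ℂ. Suppose θ_A, θ_B, θ_C, θ_D : K → K are ℂ-algebra homomorphisms satisfying: θ_A(x) = (1+w)·x, θ_A(y) = (1+w)^{−1}·y, θ_A(z) = z, θ_A(w) = w; θ_B(x) = x, θ_B(y) = y, θ_B(z) = (1+y)·z, θ_B(w) = (1+y)^{−1}·w; θ_C(x) = (1+w)^{−1}·x, θ_C(y) = (1+w)·y, θ_C(z) = z, θ_C(w) = w; θ_D(x) = x, θ_D(y) = y, θ_D(z) = (1+y)^{−1}·z, θ_D(w) = (1+y)·w. Then the composite θ = θ_D ∘ θ_C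 ∘ θ_B ∘ θ_A satisfies θ(x) = (1 + w·y)^{−1}·x, θ(y) = (1 + w·y)·y, θ(z) = (1 + w·y)·z, and θ(w) = (1 + w·y)^{−1}·w. -/
open MvPolynomial

/-- In `K = ℂ(x,y,z,w)`, the composite of the four wall-crossing ℂ-algebra
homomorphisms `θ_A, θ_B, θ_C, θ_D` (with the prescribed values on `x,y,z,w`) acts by
`x ↦ (1+wy)⁻¹x`, `y ↦ (1+wy)y`, `z ↦ (1+wy)z`, `w ↦ (1+wy)⁻¹w`. -/
theorem stmt_16 (K : Type) [Field K] [Algebra ℂ K]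
    [Algebra (MvPolynomial (Fin 4) ℂ) K]
    [IsScalarTower ℂ (MvPolynomial (Fin 4) ℂ) K]
    [IsFractionRing (MvPolynomial (Fin 4) ℂ) K]
    (x y z w : K)
    (hx : x = algebraMap (MvPolynomial (Fin 4) ℂ) K (X 0))
    (hy : y = algebraMap (MvPolynomial (Fin 4) ℂ) K (X 1))
    (hz : z = algebraMap (MvPolynomial (Fin 4) ℂ) K (X 2))
    (hw : w = algebraMap (MvPolynomial (Fin 4) ℂ) K (X 3))
    (θA θB θC θD : K →ₐ[ℂ] K)
    (hAx : θA x = (1 + w) * x) (hAy : θA y = (1 + w)⁻¹ * y)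
    (hAz : θA z = z) (hAw : θA w = w)
    (hBx : θB x = x) (hBy : θB y = y)
    (hBz : θB z = (1 + y) * z) (hBw : θB w = (1 + y)⁻¹ * w)
    (hCx : θC x = (1 + w)⁻¹ * x) (hCy : θC y = (1 + w) * y)
    (hCz : θC z = z) (hCw : θC w = w)
    (hDx : θD x = x) (hDy : θD y = y)
    (hDz : θD z = (1 + y)⁻¹ * z) (hDw : θD w = (1 + y) * w) :
    (θD.comp (θC.comp (θB.comp θA))) x = (1 + w * y)⁻¹ * x ∧
    (θD.comp (θC.comp (θB.comp θA))) y = (1 + w * y) * y ∧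
    (θD.comp (θC.comp (θB.comp θA))) z = (1 + w * y) * z ∧
    (θD.comp (θC.comp (θB.comp θA))) w = (1 + w * y)⁻¹ * w := by
  have nz : ∀ p : MvPolynomial (Fin 4) ℂ, constantCoeff p ≠ 0 →
      algebraMap (MvPolynomial (Fin 4) ℂ) K p ≠ 0 := by
    intro p hp h0
    apply hp
    have : p = 0 := (map_eq_zero_iff _ (IsFractionRing.injective _ _)).mp h0
    simp [this]
  have h1 : (1 : K) + w ≠ 0 := by
    rw [hw, ← map_one (algebraMap (MvPolynomial (Fin 4) ℂ) K), ← map_add]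
    exact nz _ (by simp)
  have h2 : (1 : K) + y ≠ 0 := by
    rw [hy, ← map_one (algebraMap (MvPolynomial (Fin 4) ℂ) K), ← map_add]
    exact nz _ (by simp)
  have h3 : (1 : K) + w * y ≠ 0 := by
    rw [hw, hy, ← map_mul, ← map_one (algebraMap (MvPolynomial (Fin 4) ℂ) K), ← map_add]
    exact nz _ (by simp)
  have h4 : (1 : K) + (1 + y) * w ≠ 0 := by
    rw [hw, hy, ← map_one (algebraMap (MvPolynomial (Fin 4) ℂ) K), ← map_add, ← map_mul, ← map_add]
    exact nz _ (by simp)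
  have h5 : (1 : K) + (1 + (1 + y) * w) * y ≠ 0 := by
    rw [hw, hy, ← map_one (algebraMap (MvPolynomial (Fin 4) ℂ) K), ← map_add, ← map_mul,
      ← map_add, ← map_mul, ← map_add]
    exact nz _ (by simp)
  have h6 : (1 : K) + (1 + w) * y ≠ 0 := by
    rw [hw, hy, ← map_one (algebraMap (MvPolynomial (Fin 4) ℂ) K), ← map_add, ← map_mul, ← map_add]
    exact nz _ (by simp)
  have h7 : (1 : K) + y + y * w * 2 + y ^ 2 * w + w ≠ 0 := by
    intro h
    exact mul_ne_zero h2 h4 (by linear_combination h)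
  refine ⟨?_, ?_, ?_, ?_⟩ <;>
  · simp only [AlgHom.comp_apply, hAx, hAy, hAz, hAw, map_mul, map_add, map_one, map_inv₀,
      hBx, hBy, hBz, hBw, hCx, hCy, hCz, hCw, hDx, hDy, hDz, hDw]
    have h5' : (1 : K) + y * (1 + (1 + y) * w) ≠ 0 := by rwa [mul_comm]
    have h3' : (1 : K) + y * w ≠ 0 := by rwa [mul_comm]
    field_simp
    first
    | ring1
    | linear_combination (y + y ^ 2 * w) * mul_inv_cancel₀ h7
end
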